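/- arXiv:1907.12846 — 6 statements merged into one kernel-verified Lean document; each statement's English description precedes it below -/
import Mathlib

section
/- Let n₁, n₂ be positive integers, n = n₁ + n₂, r an integer, and A(t) = t^r · Σ_{i≥0} A_i t^i ∈ M(n, ℂ((t))) with A_i ∈ M(n, ℂ). Suppose A_0 = diag(A_0^{11}, A_0^{22}) is block diagonal with A_0^{jj} ∈ M(n_j, ℂ) for j = 1, 2, and the sets of eigenvalues of A_0^{11} and of A_0^{22} are disjoint. Then there exist T_{12} ∈ M(n₁×n₂, ℂ[[t]]) and T_{21} ∈ M(n₂×n₁, ℂ[[t]]), both with zero constant term, such that the block matrix T(t) with diagonal blocks I_{n₁}, I_{n₂} and off-diagonal blocks T_{12}(t), T_{21}(t) is invertible over ℂ[[t]] and T(t) A(t) T(t)⁻¹ = diag(B_{11}(t), B_{22}(t)) is block diagonal, where B_{jj}(t) = t^r · Σ_{i≥0} B_i^{jj} t^i ∈ M(n_j, ℂ((t))) and B_0^{jj} = A_0^{jj} for j = 1, 2. -/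
open Matrix Polynomial

variable {m n : Type*} [Fintype m] [Fintype n] [DecidableEq m] [DecidableEq n]

/-- If μ is a root of the charpoly then μ is in the spectrum. -/
lemma mem_spectrum_of_isRoot {B : Matrix n n ℂ} {μ : ℂ}
    (h : IsRoot B.charpoly μ) : μ ∈ spectrum ℂ B := by
  rw [spectrum.mem_iff, Matrix.isUnit_iff_isUnit_det]
  intro hu
  have heval : (B.charpoly).eval μ = ((charmatrix B).map (evalRingHom μ)).det := by
    rw [Matrix.charpoly, ← Polynomial.coe_evalRingHom, RingHom.map_det]
    rfl
  have hmap : (charmatrix B).map (evalRingHom μ) = algebraMap ℂ (Matrix n n ℂ) μ - B := by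
    ext i j
    by_cases hij : i = j
    · subst hij; simp [charmatrix_apply_eq, Matrix.algebraMap_matrix_apply]
    · simp [charmatrix_apply_ne _ _ _ hij, Matrix.algebraMap_matrix_apply, hij]
  rw [hmap] at heval
  rw [Polynomial.IsRoot, heval] at h
  exact hu.ne_zero h

lemma sylPowComm {A : Matrix m m ℂ} {B : Matrix n n ℂ} {X : Matrix m n ℂ}
    (h : A * X = X * B) (k : ℕ) : A ^ k * X = X * B ^ k := by
  induction k with
  | zero => simp
  | succ k ih =>
      rw [pow_succ, pow_succ, Matrix.mul_assoc, h, ← Matrix.mul_assoc, ih, Matrix.mul_assoc]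

lemma aeval_mul_comm {A : Matrix m m ℂ} {B : Matrix n n ℂ} {X : Matrix m n ℂ}
    (h : A * X = X * B) (p : ℂ[X]) : (aeval A p) * X = X * (aeval B p) := by
  induction p using Polynomial.induction_on' with
  | add p q hp hq => simp [Matrix.add_mul, Matrix.mul_add, hp, hq]
  | monomial k c =>
      rw [aeval_monomial, aeval_monomial, Algebra.algebraMap_eq_smul_one,
        Algebra.algebraMap_eq_smul_one, smul_mul_assoc, smul_mul_assoc, one_mul, one_mul,
        Matrix.smul_mul, sylPowComm h, Matrix.mul_smul]

lemma isUnit_aeval_prod_roots {A : Matrix m m ℂ} (s : Multiset ℂ)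
    (hs : ∀ μ ∈ s, IsUnit (aeval A ((X : ℂ[X]) - C μ))) :
    IsUnit (aeval A (s.map fun a => (X : ℂ[X]) - C a).prod) := by
  induction s using Multiset.induction with
  | empty => simp
  | cons a s ih =>
      rw [Multiset.map_cons, Multiset.prod_cons, _root_.map_mul]
      exact (hs a (Multiset.mem_cons_self a s)).mul
        (ih fun μ hμ => hs μ (Multiset.mem_cons_of_mem hμ))

lemma sylvester_solvable {A : Matrix m m ℂ} {B : Matrix n n ℂ}
    (hdisj : Disjoint (spectrum ℂ A) (spectrum ℂ B)) (C : Matrix m n ℂ) :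
    ∃ Y : Matrix m n ℂ, A * Y - Y * B = C := by
  let φ : Matrix m n ℂ →ₗ[ℂ] Matrix m n ℂ :=
    { toFun := fun Y => A * Y - Y * B
      map_add' := fun Y Z => by
        simp only [Matrix.mul_add, Matrix.add_mul]; abel
      map_smul' := fun c Y => by
        simp [Matrix.mul_smul, Matrix.smul_mul, smul_sub] }
  have hinj : Function.Injective φ := by
    rw [← LinearMap.ker_eq_bot, LinearMap.ker_eq_bot']
    intro Y hY
    have hAX : A * Y = Y * B := by
      have h0 : A * Y - Y * B = 0 := hY
      rw [sub_eq_zero] at h0; exact h0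
    have h1 : (aeval A B.charpoly) * Y = 0 := by
      rw [aeval_mul_comm hAX, Matrix.aeval_self_charpoly, Matrix.mul_zero]
    have hu : IsUnit (aeval A B.charpoly) := by
      have hsp : B.charpoly.Splits := IsAlgClosed.splits _
      have heq := hsp.eq_prod_roots_of_monic B.charpoly_monic
      rw [heq]
      refine isUnit_aeval_prod_roots _ fun μ hμ => ?_
      have hμB : μ ∈ spectrum ℂ B :=
        mem_spectrum_of_isRoot (Polynomial.isRoot_of_mem_roots hμ)
      have hμA : μ ∉ spectrum ℂ A := fun h => hdisj.ne_of_mem h hμB rfl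
      rw [spectrum.notMem_iff] at hμA
      have hrw : aeval A ((X : ℂ[X]) - Polynomial.C μ) =
          -(algebraMap ℂ (Matrix m m ℂ) μ - A) := by
        rw [map_sub, aeval_X, aeval_C, neg_sub]
      rw [hrw]
      exact hμA.neg
    obtain ⟨u, hu⟩ := hu
    calc Y = ((↑u⁻¹ : Matrix m m ℂ) * ↑u) * Y := by rw [Units.inv_mul, Matrix.one_mul]
    _ = (↑u⁻¹ : Matrix m m ℂ) * (aeval A B.charpoly * Y) := by rw [hu, Matrix.mul_assoc]
    _ = 0 := by rw [h1, Matrix.mul_zero]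
  have hsurj : Function.Surjective φ := by
    rwa [← LinearMap.injective_iff_surjective]
  exact hsurj C

noncomputable def sylSolve (P : Matrix m m ℂ) (Q : Matrix n n ℂ)
    (hdisj : Disjoint (spectrum ℂ P) (spectrum ℂ Q)) (C : Matrix m n ℂ) : Matrix m n ℂ :=
  Classical.choose (sylvester_solvable hdisj C)

lemma sylSolve_spec (P : Matrix m m ℂ) (Q : Matrix n n ℂ)
    (hdisj : Disjoint (spectrum ℂ P) (spectrum ℂ Q)) (C : Matrix m n ℂ) :
    P * sylSolve P Q hdisj C - sylSolve P Q hdisj C * Q = C :=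
  Classical.choose_spec (sylvester_solvable hdisj C)

noncomputable def Xs (P : Matrix m m ℂ) (Q : Matrix n n ℂ)
    (hdisj : Disjoint (spectrum ℂ P) (spectrum ℂ Q))
    (a11 : ℕ → Matrix m m ℂ) (a12 : ℕ → Matrix m n ℂ)
    (a21 : ℕ → Matrix n m ℂ) (a22 : ℕ → Matrix n n ℂ) : ℕ → Matrix m n ℂ
  | 0 => 0
  | (s+1) => sylSolve P Q hdisj (a12 (s+1)
      + ∑ i ∈ (Finset.range (s+1)).attach, Xs P Q hdisj a11 a12 a21 a22 i.1 * a22 (s+1-i.1)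
      - ∑ j ∈ (Finset.range (s+1)).attach, a11 (s+1-j.1) * Xs P Q hdisj a11 a12 a21 a22 j.1
      - ∑ k ∈ (Finset.range (s+1)).attach,
          (∑ pq ∈ (Finset.HasAntidiagonal.antidiagonal k.1).attach,
              Xs P Q hdisj a11 a12 a21 a22 pq.1.1 * a21 pq.1.2) *
          (if _ : s+1-k.1 ≤ s then Xs P Q hdisj a11 a12 a21 a22 (s+1-k.1) else 0))
  decreasing_by
  · exact Finset.mem_range.mp i.2
  · exact Finset.mem_range.mp j.2
  · have h1 := Finset.HasAntidiagonal.antidiagonal.fst_le pq.2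
    have h2 := Finset.mem_range.mp k.2
    omega
  · omega

lemma Xs_zero (P Q hdisj a11 a12 a21 a22) : Xs (m := m) (n := n) P Q hdisj a11 a12 a21 a22 0 = 0 := by
  rw [Xs]

lemma Xs_succ_spec (P : Matrix m m ℂ) (Q : Matrix n n ℂ)
    (hdisj : Disjoint (spectrum ℂ P) (spectrum ℂ Q))
    (a11 : ℕ → Matrix m m ℂ) (a12 : ℕ → Matrix m n ℂ)
    (a21 : ℕ → Matrix n m ℂ) (a22 : ℕ → Matrix n n ℂ) (s : ℕ) :
    P * Xs P Q hdisj a11 a12 a21 a22 (s+1) - Xs P Q hdisj a11 a12 a21 a22 (s+1) * Q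
      = a12 (s+1)
      + ∑ i ∈ Finset.range (s+1), Xs P Q hdisj a11 a12 a21 a22 i * a22 (s+1-i)
      - ∑ j ∈ Finset.range (s+1), a11 (s+1-j) * Xs P Q hdisj a11 a12 a21 a22 j
      - ∑ k ∈ Finset.range (s+1),
          (∑ pq ∈ Finset.HasAntidiagonal.antidiagonal k, Xs P Q hdisj a11 a12 a21 a22 pq.1 * a21 pq.2) *
          (if s+1-k ≤ s then Xs P Q hdisj a11 a12 a21 a22 (s+1-k) else 0) := by
  conv_lhs => rw [Xs]
  rw [sylSolve_spec]
  rw [Finset.sum_attach _ (fun i => Xs P Q hdisj a11 a12 a21 a22 i * a22 (s+1-i))]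
  rw [Finset.sum_attach _ (fun j => a11 (s+1-j) * Xs P Q hdisj a11 a12 a21 a22 j)]
  congr 1
  rw [← Finset.sum_attach (Finset.range (s+1))]
  refine Finset.sum_congr rfl fun k _ => ?_
  rw [Finset.sum_attach _ (fun pq : ℕ × ℕ => Xs P Q hdisj a11 a12 a21 a22 pq.1 * a21 pq.2)]
  split_ifs with h <;> rfl

lemma Xs_equation (P : Matrix m m ℂ) (Q : Matrix n n ℂ)
    (hdisj : Disjoint (spectrum ℂ P) (spectrum ℂ Q))
    (a11 : ℕ → Matrix m m ℂ) (a12 : ℕ → Matrix m n ℂ)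
    (a21 : ℕ → Matrix n m ℂ) (a22 : ℕ → Matrix n n ℂ)
    (h110 : a11 0 = P) (h120 : a12 0 = 0) (h220 : a22 0 = Q) (d : ℕ) :
    a12 d + ∑ ij ∈ Finset.HasAntidiagonal.antidiagonal d,
        Xs P Q hdisj a11 a12 a21 a22 ij.1 * a22 ij.2
      = ∑ ij ∈ Finset.HasAntidiagonal.antidiagonal d, a11 ij.1 * Xs P Q hdisj a11 a12 a21 a22 ij.2
      + ∑ ij ∈ Finset.HasAntidiagonal.antidiagonal d,
          (∑ pq ∈ Finset.HasAntidiagonal.antidiagonal ij.1, Xs P Q hdisj a11 a12 a21 a22 pq.1 * a21 pq.2) *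
          Xs P Q hdisj a11 a12 a21 a22 ij.2 := by
  set X' := Xs P Q hdisj a11 a12 a21 a22 with hX'
  cases d with
  | zero =>
      have hX0 : X' 0 = 0 := Xs_zero P Q hdisj a11 a12 a21 a22
      simp [hX0, h120, Matrix.mul_zero, Matrix.zero_mul]
  | succ s =>
      have hspec := Xs_succ_spec P Q hdisj a11 a12 a21 a22 s
      rw [← hX'] at hspec
      have hS1 : ∑ ij ∈ Finset.HasAntidiagonal.antidiagonal (s+1), X' ij.1 * a22 ij.2
          = (∑ i ∈ Finset.range (s+1), X' i * a22 (s+1-i)) + X' (s+1) * Q := by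
        rw [Finset.Nat.sum_antidiagonal_eq_sum_range_succ_mk, Finset.sum_range_succ,
          Nat.sub_self, h220]
      have hS2 : ∑ ij ∈ Finset.HasAntidiagonal.antidiagonal (s+1), a11 ij.1 * X' ij.2
          = P * X' (s+1) + ∑ j ∈ Finset.range (s+1), a11 (s+1-j) * X' j := by
        rw [Finset.Nat.sum_antidiagonal_eq_sum_range_succ_mk, Finset.sum_range_succ']
        rw [h110, Nat.sub_zero, add_comm]
        congr 1
        conv_rhs => rw [← Finset.sum_range_reflect (fun j => a11 (s+1-j) * X' j) (s+1)]
        refine Finset.sum_congr rfl fun j hj => ?_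
        have hj' : j < s + 1 := Finset.mem_range.mp hj
        have e1 : s + 1 - (s + 1 - 1 - j) = j + 1 := by omega
        have e3 : s + 1 - (j + 1) = s + 1 - 1 - j := by omega
        rw [e1, e3]
      have hU : ∑ ij ∈ Finset.HasAntidiagonal.antidiagonal (s+1),
            (∑ pq ∈ Finset.HasAntidiagonal.antidiagonal ij.1, X' pq.1 * a21 pq.2) * X' ij.2
          = ∑ k ∈ Finset.range (s+1),
              (∑ pq ∈ Finset.HasAntidiagonal.antidiagonal k, X' pq.1 * a21 pq.2) *
              (if s+1-k ≤ s then X' (s+1-k) else 0) := by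
        rw [Finset.Nat.sum_antidiagonal_eq_sum_range_succ_mk, Finset.sum_range_succ,
          Nat.sub_self]
        have hX0 : X' 0 = 0 := Xs_zero P Q hdisj a11 a12 a21 a22
        rw [hX0, Matrix.mul_zero, add_zero]
        refine Finset.sum_congr rfl fun k hk => ?_
        have hk' : k < s+1 := Finset.mem_range.mp hk
        by_cases h0 : k = 0
        · subst h0
          rw [if_neg (by omega)]
          simp [hX0, Matrix.zero_mul]
        · rw [if_pos (by omega)]
      rw [hS1, hS2, hU]
      rw [sub_eq_iff_eq_add] at hspec
      rw [hspec]
      abel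

noncomputable def mcoeff {a b : Type*} (k : ℕ) (M : Matrix a b (PowerSeries ℂ)) : Matrix a b ℂ :=
  M.map (PowerSeries.coeff k)

lemma mcoeff_apply {a b : Type*} (k : ℕ) (M : Matrix a b (PowerSeries ℂ)) (i : a) (j : b) :
    mcoeff k M i j = PowerSeries.coeff k (M i j) := rfl

lemma mcoeff_add {a b : Type*} (k : ℕ) (M N : Matrix a b (PowerSeries ℂ)) :
    mcoeff k (M + N) = mcoeff k M + mcoeff k N := by
  ext i j; simp [mcoeff_apply, Matrix.add_apply]

lemma mcoeff_mul {a b c : Type*} [Fintype b] (k : ℕ) (M : Matrix a b (PowerSeries ℂ))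
    (N : Matrix b c (PowerSeries ℂ)) :
    mcoeff k (M * N) = ∑ ij ∈ Finset.HasAntidiagonal.antidiagonal k, mcoeff ij.1 M * mcoeff ij.2 N := by
  ext i j
  simp only [mcoeff_apply, Matrix.mul_apply, Matrix.sum_apply, map_sum, PowerSeries.coeff_mul]
  rw [Finset.sum_comm]

lemma half_split (P : Matrix m m ℂ) (Q : Matrix n n ℂ)
    (hdisj : Disjoint (spectrum ℂ P) (spectrum ℂ Q))
    (b11 : Matrix m m (PowerSeries ℂ)) (b12 : Matrix m n (PowerSeries ℂ))
    (b21 : Matrix n m (PowerSeries ℂ)) (b22 : Matrix n n (PowerSeries ℂ))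
    (h11 : mcoeff 0 b11 = P) (h12 : mcoeff 0 b12 = 0) (h22 : mcoeff 0 b22 = Q) :
    ∃ T : Matrix m n (PowerSeries ℂ), mcoeff 0 T = 0 ∧
      b12 + T * b22 = (b11 + T * b21) * T := by
  set a11 : ℕ → Matrix m m ℂ := fun i => mcoeff i b11 with ha11
  set a12 : ℕ → Matrix m n ℂ := fun i => mcoeff i b12 with ha12
  set a21 : ℕ → Matrix n m ℂ := fun i => mcoeff i b21 with ha21
  set a22 : ℕ → Matrix n n ℂ := fun i => mcoeff i b22 with ha22
  set X' := Xs P Q hdisj a11 a12 a21 a22 with hX'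
  refine ⟨fun i j => PowerSeries.mk fun d => X' d i j, ?_, ?_⟩
  · ext i j
    change PowerSeries.coeff 0 (PowerSeries.mk fun d => X' d i j) = 0; simp only [PowerSeries.coeff_mk]
    rw [hX', Xs_zero]
    rfl
  · set T : Matrix m n (PowerSeries ℂ) := fun i j => PowerSeries.mk fun d => X' d i j with hT
    have hcT : ∀ d, mcoeff d T = X' d := by
      intro d; ext i j; change PowerSeries.coeff d (PowerSeries.mk fun d => X' d i j) = _; simp [PowerSeries.coeff_mk]
    have key : ∀ d, mcoeff d (b12 + T * b22) = mcoeff d ((b11 + T * b21) * T) := by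
      intro d
      rw [mcoeff_add, mcoeff_mul, mcoeff_mul]
      have hrhs : ∀ ij : ℕ × ℕ, ij ∈ Finset.HasAntidiagonal.antidiagonal d →
          mcoeff ij.1 (b11 + T * b21) * mcoeff ij.2 T
            = a11 ij.1 * X' ij.2 +
              (∑ pq ∈ Finset.HasAntidiagonal.antidiagonal ij.1, X' pq.1 * a21 pq.2) * X' ij.2 := by
        intro ij _
        rw [mcoeff_add, mcoeff_mul, hcT, Matrix.add_mul]
        congr 2
        refine Finset.sum_congr rfl fun pq _ => by rw [hcT]
      rw [Finset.sum_congr rfl hrhs, Finset.sum_add_distrib]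
      have := Xs_equation P Q hdisj a11 a12 a21 a22 h11 (by rw [ha12]; exact h12) h22 d
      rw [← hX'] at this
      have hlhs : ∑ ij ∈ Finset.HasAntidiagonal.antidiagonal d, mcoeff ij.1 T * mcoeff ij.2 b22
          = ∑ ij ∈ Finset.HasAntidiagonal.antidiagonal d, X' ij.1 * a22 ij.2 :=
        Finset.sum_congr rfl fun ij _ => by rw [hcT]
      rw [hlhs]
      exact this
    ext1 i j
    ext1 d
    have h := key d
    have := congrFun (congrFun h i) j
    simpa [mcoeff_apply] using this


lemma ofPS_coeff_neg (x : PowerSeries ℂ) (mm : ℤ) (hm : mm < 0) :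
    (HahnSeries.ofPowerSeries ℤ ℂ x).coeff mm = 0 := by
  rw [HahnSeries.ofPowerSeries_apply]
  apply HahnSeries.embDomain_notin_range
  rintro ⟨nn, hn⟩
  have hn' : (nn : ℤ) = mm := hn
  omega

lemma single_ofPS_coeff (r : ℤ) (x : PowerSeries ℂ) (k : ℤ) :
    ((HahnSeries.single r (1 : ℂ)) * HahnSeries.ofPowerSeries ℤ ℂ x).coeff k
      = if r ≤ k then PowerSeries.coeff (k - r).toNat x else 0 := by
  obtain ⟨c, rfl⟩ : ∃ c, k = c + r := ⟨k - r, by ring⟩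
  have h2 : c + r - r = c := by ring
  rw [h2]
  by_cases h : 0 ≤ c
  · rw [if_pos (by omega : r ≤ c + r)]
    rw [show c + r = (c.toNat : ℤ) + r by omega, HahnSeries.coeff_single_mul_add, one_mul,
      HahnSeries.ofPowerSeries_apply_coeff]
  · rw [if_neg (by omega), HahnSeries.coeff_single_mul_add, one_mul]
    exact ofPS_coeff_neg _ _ (by omega)

lemma lmul_smul {a b c : Type*} [Fintype b] (d : LaurentSeries ℂ)
    (M : Matrix a b (LaurentSeries ℂ)) (N : Matrix b c (LaurentSeries ℂ)) :
    M * (d • N) = d • (M * N) := by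
  refine Matrix.ext fun i j => ?_
  rw [Matrix.mul_apply, Matrix.smul_apply, Matrix.mul_apply, smul_eq_mul, Finset.mul_sum]
  refine Finset.sum_congr rfl fun k _ => ?_
  rw [Matrix.smul_apply, smul_eq_mul]
  ring

lemma lsmul_mul {a b c : Type*} [Fintype b] (d : LaurentSeries ℂ)
    (M : Matrix a b (LaurentSeries ℂ)) (N : Matrix b c (LaurentSeries ℂ)) :
    (d • M) * N = d • (M * N) := by
  refine Matrix.ext fun i j => ?_
  rw [Matrix.mul_apply, Matrix.smul_apply, Matrix.mul_apply, smul_eq_mul, Finset.mul_sum]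
  refine Finset.sum_congr rfl fun k _ => ?_
  rw [Matrix.smul_apply, smul_eq_mul]
  ring


set_option maxHeartbeats 1000000

/-- **Splitting lemma (two blocks).**  Let `A(t) = t^r Σ_{i≥0} A_i t^i` be an `n × n`
matrix of formal Laurent series (`n = n₁ + n₂`), whose leading coefficient
`A_0` is block diagonal with blocks `A011`, `A022` having disjoint sets of eigenvalues.
Then there are off-diagonal blocks `T12`, `T21` with entries in `ℂ[[t]]` and zero
constant term such that the block matrix `T = (I, T12; T21, I)` is invertible over
`ℂ[[t]]` and conjugates `A` into a block diagonal matrix `diag(B11, B22)` of the same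
shape `t^r Σ_{i≥0} B_i t^i`, with `B_0^{jj} = A_0^{jj}`. -/
theorem splitting_lemma_two_blocks
    (n₁ n₂ : ℕ) (hn₁ : 0 < n₁) (hn₂ : 0 < n₂) (r : ℤ)
    (A : Matrix (Fin n₁ ⊕ Fin n₂) (Fin n₁ ⊕ Fin n₂) (LaurentSeries ℂ))
    (hord : ∀ p q, ∀ k : ℤ, k < r → (A p q).coeff k = 0)
    (A011 : Matrix (Fin n₁) (Fin n₁) ℂ) (A022 : Matrix (Fin n₂) (Fin n₂) ℂ)
    (hblock : ∀ p q, (A p q).coeff r = Matrix.fromBlocks A011 0 0 A022 p q)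
    (hdisj : Disjoint (spectrum ℂ A011) (spectrum ℂ A022)) :
    ∃ (T12 : Matrix (Fin n₁) (Fin n₂) (PowerSeries ℂ))
      (T21 : Matrix (Fin n₂) (Fin n₁) (PowerSeries ℂ)),
      (∀ i j, PowerSeries.constantCoeff (T12 i j) = 0) ∧
      (∀ i j, PowerSeries.constantCoeff (T21 i j) = 0) ∧
      IsUnit (Matrix.fromBlocks 1 T12 T21 1) ∧
      ∃ (B11 : Matrix (Fin n₁) (Fin n₁) (LaurentSeries ℂ))
        (B22 : Matrix (Fin n₂) (Fin n₂) (LaurentSeries ℂ)),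
        (Matrix.fromBlocks 1 T12 T21 1).map (HahnSeries.ofPowerSeries ℤ ℂ) * A
          = Matrix.fromBlocks B11 0 0 B22 *
            (Matrix.fromBlocks 1 T12 T21 1).map (HahnSeries.ofPowerSeries ℤ ℂ) ∧
        (∀ i j, ∀ k : ℤ, k < r → (B11 i j).coeff k = 0) ∧
        (∀ i j, ∀ k : ℤ, k < r → (B22 i j).coeff k = 0) ∧
        (∀ i j, (B11 i j).coeff r = A011 i j) ∧
        (∀ i j, (B22 i j).coeff r = A022 i j) := by
  classical
  set f := HahnSeries.ofPowerSeries ℤ ℂ with hf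
  set Abig : Matrix (Fin n₁ ⊕ Fin n₂) (Fin n₁ ⊕ Fin n₂) (PowerSeries ℂ) :=
    fun p q => PowerSeries.mk fun i => (A p q).coeff (r + i) with hAbig
  have hA : ∀ p q, A p q = (HahnSeries.single r (1 : ℂ)) * f (Abig p q) := by
    intro p q
    ext k
    rw [hf, single_ofPS_coeff]
    by_cases h : r ≤ k
    · rw [if_pos h]
      rw [hAbig]
      simp only [PowerSeries.coeff_mk]
      congr 1
      omega
    · rw [if_neg h]
      exact hord p q k (by omega)
  set b11 := Abig.toBlocks₁₁ with hb11
  set b12 := Abig.toBlocks₁₂ with hb12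
  set b21 := Abig.toBlocks₂₁ with hb21
  set b22 := Abig.toBlocks₂₂ with hb22
  have hcoeffr : ∀ p q, PowerSeries.coeff 0 (Abig p q) = Matrix.fromBlocks A011 0 0 A022 p q := by
    intro p q
    rw [hAbig]
    simp only [PowerSeries.coeff_mk]
    rw [show r + ((0 : ℕ) : ℤ) = r by simp]
    exact hblock p q
  have hb110 : mcoeff 0 b11 = A011 := by
    ext i j
    rw [mcoeff_apply, hb11]
    simpa [Matrix.toBlocks₁₁, Matrix.fromBlocks] using hcoeffr (Sum.inl i) (Sum.inl j)
  have hb120 : mcoeff 0 b12 = 0 := by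
    ext i j
    rw [mcoeff_apply, hb12]
    simpa [Matrix.toBlocks₁₂, Matrix.fromBlocks] using hcoeffr (Sum.inl i) (Sum.inr j)
  have hb210 : mcoeff 0 b21 = 0 := by
    ext i j
    rw [mcoeff_apply, hb21]
    simpa [Matrix.toBlocks₂₁, Matrix.fromBlocks] using hcoeffr (Sum.inr i) (Sum.inl j)
  have hb220 : mcoeff 0 b22 = A022 := by
    ext i j
    rw [mcoeff_apply, hb22]
    simpa [Matrix.toBlocks₂₂, Matrix.fromBlocks] using hcoeffr (Sum.inr i) (Sum.inr j)
  clear_value Abig b11 b12 b21 b22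
  obtain ⟨T12, hT12c, hEq1⟩ := half_split A011 A022 hdisj b11 b12 b21 b22 hb110 hb120 hb220
  obtain ⟨T21, hT21c, hEq2⟩ := half_split A022 A011 hdisj.symm b22 b21 b12 b11 hb220 hb210 hb110
  set Tps : Matrix (Fin n₁ ⊕ Fin n₂) (Fin n₁ ⊕ Fin n₂) (PowerSeries ℂ) :=
    Matrix.fromBlocks 1 T12 T21 1 with hTps
  clear_value f Tps
  have hT12e : ∀ i j, PowerSeries.constantCoeff (T12 i j) = 0 := by
    intro i j
    have := congrFun (congrFun hT12c i) j
    simpa [mcoeff_apply, PowerSeries.coeff_zero_eq_constantCoeff] using this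
  have hT21e : ∀ i j, PowerSeries.constantCoeff (T21 i j) = 0 := by
    intro i j
    have := congrFun (congrFun hT21c i) j
    simpa [mcoeff_apply, PowerSeries.coeff_zero_eq_constantCoeff] using this
  refine ⟨T12, T21, hT12e, hT21e, ?_, ?_⟩
  · -- invertibility
    rw [Matrix.isUnit_iff_isUnit_det, PowerSeries.isUnit_iff_constantCoeff]
    have hdet : PowerSeries.constantCoeff (Matrix.fromBlocks 1 T12 T21 1).det
        = ((Matrix.fromBlocks 1 T12 T21 1).map (PowerSeries.constantCoeff)).det :=
      RingHom.map_det _ _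
    have hmap1 : (Matrix.fromBlocks 1 T12 T21 1).map (PowerSeries.constantCoeff)
        = (1 : Matrix (Fin n₁ ⊕ Fin n₂) (Fin n₁ ⊕ Fin n₂) ℂ) := by
      rw [Matrix.fromBlocks_map]
      have e1 : (1 : Matrix (Fin n₁) (Fin n₁) (PowerSeries ℂ)).map (PowerSeries.constantCoeff)
          = 1 := Matrix.map_one _ (map_zero _) (map_one _)
      have e2 : (1 : Matrix (Fin n₂) (Fin n₂) (PowerSeries ℂ)).map (PowerSeries.constantCoeff)
          = 1 := Matrix.map_one _ (map_zero _) (map_one _)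
      have e3 : T12.map (PowerSeries.constantCoeff) = 0 := by
        ext i j; simp [Matrix.map_apply, hT12e]
      have e4 : T21.map (PowerSeries.constantCoeff) = 0 := by
        ext i j; simp [Matrix.map_apply, hT21e]
      rw [e1, e2, e3, e4, Matrix.fromBlocks_one]
    rw [hdet, hmap1, Matrix.det_one]
    exact isUnit_one
  · -- conjugation identity
    set C11 := b11 + T12 * b21 with hC11
    set C22 := b22 + T21 * b12 with hC22
    clear_value C11 C22
    have hmulps : Tps * Abig = Matrix.fromBlocks C11 0 0 C22 * Tps := by
      have hblocks : Abig = Matrix.fromBlocks b11 b12 b21 b22 := by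
        rw [hb11, hb12, hb21, hb22]
        exact (Matrix.fromBlocks_toBlocks Abig).symm
      rw [hTps, hblocks, Matrix.fromBlocks_multiply, Matrix.fromBlocks_multiply]
      simp only [Matrix.one_mul, Matrix.mul_one, Matrix.zero_mul, Matrix.mul_zero,
        add_zero, zero_add]
      rw [hEq1, add_comm (T21 * b11) b21, hEq2, add_comm (T21 * b12) b22, ← hC11, ← hC22]
    set d : LaurentSeries ℂ := HahnSeries.single r (1 : ℂ) with hd
    clear_value d
    refine ⟨d • (C11.map f), d • (C22.map f), ?_, ?_, ?_, ?_, ?_⟩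
    · rw [← hTps]
      have hAmat : A = d • (Abig.map f) := by
        ext p q
        rw [hA p q]
        simp [Matrix.smul_apply, Matrix.map_apply, smul_eq_mul, hd]
      calc Tps.map f * A = Tps.map f * (d • Abig.map f) := by rw [← hAmat]
      _ = d • (Tps.map f * Abig.map f) := lmul_smul _ _ _
      _ = d • ((Matrix.fromBlocks C11 0 0 C22).map f * Tps.map f) := by
            rw [← Matrix.map_mul, hmulps, Matrix.map_mul]
      _ = (d • (Matrix.fromBlocks C11 0 0 C22).map f) * Tps.map f :=
            (lsmul_mul _ _ _).symm
      _ = Matrix.fromBlocks (d • C11.map f) 0 0 (d • C22.map f) * Tps.map f := by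
            rw [Matrix.fromBlocks_map, Matrix.fromBlocks_smul]
            congr 2 <;> simp [Matrix.map_zero]
    · intro i j k hk
      have : (d • (C11.map f)) i j = d * f (C11 i j) := by
        simp [Matrix.smul_apply, Matrix.map_apply, smul_eq_mul]
      rw [this, hd, hf, single_ofPS_coeff, if_neg (by omega)]
    · intro i j k hk
      have : (d • (C22.map f)) i j = d * f (C22 i j) := by
        simp [Matrix.smul_apply, Matrix.map_apply, smul_eq_mul]
      rw [this, hd, hf, single_ofPS_coeff, if_neg (by omega)]
    · intro i j
      have h1 : (d • (C11.map f)) i j = d * f (C11 i j) := by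
        simp [Matrix.smul_apply, Matrix.map_apply, smul_eq_mul]
      rw [h1, hd, hf, single_ofPS_coeff, if_pos le_rfl]
      have hm : mcoeff 0 C11 = A011 := by
        rw [hC11, mcoeff_add, mcoeff_mul]
        simp [Finset.HasAntidiagonal.antidiagonal_zero, hT12c, hb110, Matrix.zero_mul]
      have := congrFun (congrFun hm i) j
      simpa [mcoeff_apply, show (r - r).toNat = 0 by omega] using this
    · intro i j
      have h1 : (d • (C22.map f)) i j = d * f (C22 i j) := by
        simp [Matrix.smul_apply, Matrix.map_apply, smul_eq_mul]
      rw [h1, hd, hf, single_ofPS_coeff, if_pos le_rfl]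
      have hm : mcoeff 0 C22 = A022 := by
        rw [hC22, mcoeff_add, mcoeff_mul]
        simp [Finset.HasAntidiagonal.antidiagonal_zero, hT21c, hb220, Matrix.zero_mul]
      have := congrFun (congrFun hm i) j
      simpa [mcoeff_apply, show (r - r).toNat = 0 by omega] using this
end

section
/- Let n = n₁ + ⋯ + n_k with positive integers n_j, let r be an integer, and let A(t) = t^r · Σ_{i≥0} A_i t^i ∈ M(n, ℂ((t))) with A_i ∈ M(n, ℂ). Suppose A_0 = diag(A_0^{11}, …, A_0^{kk}) is block diagonal with A_0^{jj} ∈ M(n_j, ℂ), and the sets of eigenvalues of the blocks A_0^{11}, …, A_0^{kk} are pairwise disjoint. Then there exists T ∈ M(n, ℂ[[t]]), invertible over ℂ[[t]] and with T ≡ I_n (mod t), such that T A T⁻¹ = diag(B_{11}(t), …, B_{kk}(t)) is block diagonal with B_{jj}(t) = t^r · Σ_{i≥0} B_i^{jj} t^i ∈ M(n_j, ℂ((t))) and B_0^{jj} = A_0^{jj} for every j = 1, …, k. -/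
open Polynomial Matrix Finset

section Sylvester

lemma mem_spectrum_of_root {N : Type*} [Fintype N] [DecidableEq N]
    (M : Matrix N N ℂ) (μ : ℂ) (h : (Matrix.charpoly M).eval μ = 0) :
    μ ∈ spectrum ℂ M := by
  rw [spectrum.mem_iff]
  intro hu
  have hdet : ((algebraMap ℂ (Matrix N N ℂ)) μ - M).det ≠ 0 := by
    intro h0
    exact (Matrix.isUnit_iff_isUnit_det _ |>.mp hu).ne_zero h0
  apply hdet
  have : (Matrix.charpoly M).eval μ = ((algebraMap ℂ (Matrix N N ℂ)) μ - M).det := by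
    rw [Matrix.charpoly]
    rw [show (Matrix.charmatrix M).det.eval μ = (evalRingHom μ) (Matrix.charmatrix M).det from rfl]
    rw [RingHom.map_det]
    congr 1
    ext i j
    by_cases hij : i = j
    · subst hij
      simp [Matrix.charmatrix_apply_eq, Matrix.algebraMap_matrix_apply]
    · simp [Matrix.charmatrix_apply_ne _ _ _ hij, Matrix.algebraMap_matrix_apply, hij]
  rw [← this, h]

lemma pow_intertwine {m' n' : Type*} [Fintype m'] [DecidableEq m'] [Fintype n'] [DecidableEq n']
    (P : Matrix m' m' ℂ) (Q : Matrix n' n' ℂ) (X : Matrix m' n' ℂ)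
    (hX : P * X = X * Q) (f : ℂ[X]) :
    Polynomial.aeval P f * X = X * Polynomial.aeval Q f := by
  have hpow : ∀ d : ℕ, P ^ d * X = X * Q ^ d := by
    intro d
    induction d with
    | zero => simp
    | succ d ih => rw [pow_succ, pow_succ, Matrix.mul_assoc, hX, ← Matrix.mul_assoc, ih,
        Matrix.mul_assoc]
  rw [Polynomial.aeval_eq_sum_range (R := ℂ) (p := f) (x := P),
    Polynomial.aeval_eq_sum_range (R := ℂ) (p := f) (x := Q),
    Matrix.sum_mul, Matrix.mul_sum]
  refine Finset.sum_congr rfl fun i _ => ?_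
  rw [Matrix.smul_mul, Matrix.mul_smul, hpow]

lemma sylvester_surjective {m' n' : Type*} [Fintype m'] [DecidableEq m'] [Fintype n']
    [DecidableEq n'] (hm : Nonempty m')
    (P : Matrix m' m' ℂ) (Q : Matrix n' n' ℂ)
    (hdisj : Disjoint (spectrum ℂ P) (spectrum ℂ Q))
    (C : Matrix m' n' ℂ) : ∃ X : Matrix m' n' ℂ, X * Q - P * X = C := by
  set p := Matrix.charpoly P with hp
  have hdeg : 0 < p.degree := by
    have h1 : p.natDegree = Fintype.card m' := Matrix.charpoly_natDegree_eq_dim P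
    have h2 : 0 < Fintype.card m' := Fintype.card_pos_iff.mpr hm
    have : 0 < p.natDegree := h1 ▸ h2
    exact Polynomial.natDegree_pos_iff_degree_pos.mp this
  have hunit : IsUnit (Polynomial.aeval Q p) := by
    rw [← spectrum.zero_notMem_iff (R := ℂ)]
    rw [spectrum.map_polynomial_aeval_of_degree_pos Q p hdeg]
    rintro ⟨μ, hμ, hev⟩
    have : μ ∈ spectrum ℂ P := mem_spectrum_of_root P μ hev
    exact Set.disjoint_left.mp hdisj this hμ
  let S : Matrix m' n' ℂ →ₗ[ℂ] Matrix m' n' ℂ :=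
    { toFun := fun X => X * Q - P * X
      map_add' := fun X Y => by simp only [Matrix.add_mul, Matrix.mul_add]; abel
      map_smul' := fun c X => by
        simp [Matrix.smul_mul, Matrix.mul_smul, smul_sub] }
  have hinj : Function.Injective S := by
    rw [← LinearMap.ker_eq_bot, LinearMap.ker_eq_bot']
    intro X hX
    have hPX : P * X = X * Q := (sub_eq_zero.mp hX).symm
    have h1 : Polynomial.aeval P p * X = X * Polynomial.aeval Q p :=
      pow_intertwine P Q X hPX p
    rw [hp, Matrix.aeval_self_charpoly, Matrix.zero_mul] at h1
    obtain ⟨u, hu⟩ := hunit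
    calc X = X * ((u : Matrix n' n' ℂ) * ((u⁻¹ : (Matrix n' n' ℂ)ˣ) : Matrix n' n' ℂ)) := by
            rw [Units.mul_inv, Matrix.mul_one]
      _ = (X * Polynomial.aeval Q p) * ((u⁻¹ : (Matrix n' n' ℂ)ˣ) : Matrix n' n' ℂ) := by
            rw [← Matrix.mul_assoc, hu]
      _ = 0 := by rw [hp, ← h1, Matrix.zero_mul]
  have hsurj : Function.Surjective S := (LinearMap.injective_iff_surjective).mp hinj
  obtain ⟨X, hXs⟩ := hsurj C
  exact ⟨X, hXs⟩

end Sylvester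

section Recursion

variable {ι : Type*} [Fintype ι] [DecidableEq ι]

noncomputable def TBrec (Ac : ℕ → Matrix ι ι ℂ) (slv : Matrix ι ι ℂ → Matrix ι ι ℂ) :
    ℕ → Matrix ι ι ℂ × Matrix ι ι ℂ
  | 0 => (1, Ac 0)
  | (m+1) =>
      let D : Matrix ι ι ℂ :=
        (∑ i ∈ (Finset.range (m+1)).attach, (TBrec Ac slv i.1).1 * Ac (m+1-i.1)) -
        ∑ i ∈ (Finset.range m).attach, (TBrec Ac slv (i.1+1)).2 * (TBrec Ac slv (m-i.1)).1
      (slv D, slv D * Ac 0 - Ac 0 * slv D + D)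
  termination_by m => m
  decreasing_by
  · exact Finset.mem_range.mp i.2
  · have := Finset.mem_range.mp i.2; omega
  · have := Finset.mem_range.mp i.2; omega

lemma TBrec_zero (Ac : ℕ → Matrix ι ι ℂ) (slv) : TBrec Ac slv 0 = (1, Ac 0) := by
  rw [TBrec]

lemma TBrec_succ (Ac : ℕ → Matrix ι ι ℂ) (slv) (m : ℕ) :
    TBrec Ac slv (m+1) =
      ((fun D => (slv D, slv D * Ac 0 - Ac 0 * slv D + D))
        ((∑ i ∈ Finset.range (m+1), (TBrec Ac slv i).1 * Ac (m+1-i)) -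
         ∑ i ∈ Finset.range m, (TBrec Ac slv (i+1)).2 * (TBrec Ac slv (m-i)).1)) := by
  rw [TBrec]
  simp only [← Finset.sum_attach (Finset.range (m+1)) (fun i => (TBrec Ac slv i).1 * Ac (m+1-i)),
    ← Finset.sum_attach (Finset.range m) (fun i => (TBrec Ac slv (i+1)).2 * (TBrec Ac slv (m-i)).1)]

lemma TBrec_master (Ac : ℕ → Matrix ι ι ℂ) (slv) (m : ℕ) :
    ∑ i ∈ Finset.range (m+1), (TBrec Ac slv i).1 * Ac (m - i) =
    ∑ i ∈ Finset.range (m+1), (TBrec Ac slv i).2 * (TBrec Ac slv (m - i)).1 := by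
  cases m with
  | zero => simp [TBrec_zero]
  | succ m =>
    rw [Finset.sum_range_succ (fun i => (TBrec Ac slv i).1 * Ac (m + 1 - i)) (m+1),
      Finset.sum_range_succ' (fun i => (TBrec Ac slv i).2 * (TBrec Ac slv (m + 1 - i)).1) (m+1)]
    simp only [Nat.sub_self, Nat.succ_sub_succ, Nat.sub_zero]
    rw [Finset.sum_range_succ (fun i => (TBrec Ac slv (i+1)).2 * (TBrec Ac slv (m - i)).1) m]
    simp only [Nat.sub_self]
    rw [TBrec_succ, TBrec_zero]
    simp only [Matrix.mul_one, Matrix.one_mul]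
    abel

lemma coeff_mat_mul (M N : Matrix ι ι (PowerSeries ℂ)) (F G : ℕ → Matrix ι ι ℂ)
    (hM : ∀ p q m, PowerSeries.coeff m (M p q) = F m p q)
    (hN : ∀ p q m, PowerSeries.coeff m (N p q) = G m p q) (p q : ι) (d : ℕ) :
    PowerSeries.coeff d ((M * N) p q) =
      (∑ i ∈ Finset.range (d+1), F i * G (d - i)) p q := by
  rw [Matrix.mul_apply, map_sum]
  have : ∀ s : ι, PowerSeries.coeff d (M p s * N s q) =
      ∑ i ∈ Finset.range (d+1), F i p s * G (d - i) s q := by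
    intro s
    rw [PowerSeries.coeff_mul, Finset.Nat.sum_antidiagonal_eq_sum_range_succ_mk]
    exact Finset.sum_congr rfl fun i _ => by rw [hM, hN]
  rw [Finset.sum_congr rfl fun s _ => this s, Finset.sum_comm]
  rw [Matrix.sum_apply]
  exact Finset.sum_congr rfl fun i _ => by rw [Matrix.mul_apply]

end Recursion

section Hahn

lemma ofPowerSeries_coeff_neg (f : PowerSeries ℂ) (z : ℤ) (hz : z < 0) :
    ((HahnSeries.ofPowerSeries ℤ ℂ) f).coeff z = 0 := by
  rw [HahnSeries.ofPowerSeries_apply]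
  apply HahnSeries.embDomain_of_notMem_range
  rintro ⟨n, hn⟩
  have h2 : (n : ℤ) = z := hn
  omega

lemma single_one_mul_coeff (r : ℤ) (x : HahnSeries ℤ ℂ) (m : ℤ) :
    (HahnSeries.single r (1:ℂ) * x).coeff m = x.coeff (m - r) := by
  have h := HahnSeries.coeff_single_mul_add (r := (1:ℂ)) (x := x) (a := m - r) (b := r)
  rw [sub_add_cancel] at h
  rw [h, one_mul]

end Hahn

/-- **Splitting lemma (several blocks).**  Let `A(t) = t^r Σ_{i≥0} A_i t^i` be a square
matrix of formal Laurent series indexed by `Σ j, Fin (n j)` (so of size `n = n 0 + ⋯`),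
whose leading coefficient `A_0` is block diagonal with blocks having pairwise disjoint
sets of eigenvalues.  Then there is `T` over `ℂ[[t]]`, invertible and congruent to the
identity mod `t`, conjugating `A` into a block diagonal matrix `B` of the same shape
`t^r Σ_{i≥0} B_i t^i` with `B_0^{jj} = A_0^{jj}` for every block `j`. -/
theorem splitting_lemma_blocks
    (k : ℕ) (n : Fin k → ℕ) (hn : ∀ j, 0 < n j) (r : ℤ)
    (A : Matrix ((j : Fin k) × Fin (n j)) ((j : Fin k) × Fin (n j)) (LaurentSeries ℂ))
    (hord : ∀ p q, ∀ m : ℤ, m < r → (A p q).coeff m = 0)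
    (hblock : ∀ p q, p.1 ≠ q.1 → (A p q).coeff r = 0)
    (hdisj : ∀ j j' : Fin k, j ≠ j' →
      Disjoint
        (spectrum ℂ (Matrix.of fun i i' : Fin (n j) => (A ⟨j, i⟩ ⟨j, i'⟩).coeff r))
        (spectrum ℂ (Matrix.of fun i i' : Fin (n j') => (A ⟨j', i⟩ ⟨j', i'⟩).coeff r))) :
    ∃ T : Matrix ((j : Fin k) × Fin (n j)) ((j : Fin k) × Fin (n j)) (PowerSeries ℂ),
      IsUnit T ∧
      (∀ p q, PowerSeries.constantCoeff (T p q) = if p = q then 1 else 0) ∧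
      ∃ B : Matrix ((j : Fin k) × Fin (n j)) ((j : Fin k) × Fin (n j)) (LaurentSeries ℂ),
        T.map (HahnSeries.ofPowerSeries ℤ ℂ) * A = B * T.map (HahnSeries.ofPowerSeries ℤ ℂ) ∧
        (∀ p q, p.1 ≠ q.1 → B p q = 0) ∧
        (∀ p q, ∀ m : ℤ, m < r → (B p q).coeff m = 0) ∧
        (∀ p q, p.1 = q.1 → (B p q).coeff r = (A p q).coeff r) := by
  classical
  -- coefficient matrices of A
  set Ac : ℕ → Matrix ((j : Fin k) × Fin (n j)) ((j : Fin k) × Fin (n j)) ℂ := fun m => Matrix.of fun p q => (A p q).coeff (r + m) with hAc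
  have hAc_apply : ∀ m (p q : (j : Fin k) × Fin (n j)), Ac m p q = (A p q).coeff (r + m) := fun m p q => rfl
  have hA0 : ∀ p q : (j : Fin k) × Fin (n j), Ac 0 p q = (A p q).coeff r := by
    intro p q; rw [hAc_apply]; norm_num
  -- the diagonal blocks of A₀
  set P : ∀ j : Fin k, Matrix (Fin (n j)) (Fin (n j)) ℂ :=
    fun j => Matrix.of fun i i' => (A ⟨j, i⟩ ⟨j, i'⟩).coeff r with hP
  have hne : ∀ j, Nonempty (Fin (n j)) := fun j => Fin.pos_iff_nonempty.mp (hn j)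
  have hex : ∀ (j j' : Fin k), j ≠ j' → ∀ C : Matrix (Fin (n j)) (Fin (n j')) ℂ,
      ∃ X : Matrix (Fin (n j)) (Fin (n j')) ℂ, X * P j' - P j * X = C := by
    intro j j' h C
    refine sylvester_surjective (hne j) (P j) (P j') ?_ C
    rw [hP]
    exact hdisj j j' h
  choose Xs hXs using hex
  set slv : Matrix ((j : Fin k) × Fin (n j)) ((j : Fin k) × Fin (n j)) ℂ → Matrix ((j : Fin k) × Fin (n j)) ((j : Fin k) × Fin (n j)) ℂ := fun D => Matrix.of fun p q =>
    if h : p.1 = q.1 then 0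
    else Xs p.1 q.1 h (Matrix.of fun a b => -D ⟨p.1, a⟩ ⟨q.1, b⟩) p.2 q.2 with hslvdef
  -- the key property of slv
  have hslv : ∀ (D : Matrix ((j : Fin k) × Fin (n j)) ((j : Fin k) × Fin (n j)) ℂ) (p q : (j : Fin k) × Fin (n j)), p.1 ≠ q.1 →
      (slv D * Ac 0 - Ac 0 * slv D + D) p q = 0 := by
    rintro D ⟨j, a⟩ ⟨j', b⟩ hjj'
    simp only at hjj'
    set C : Matrix (Fin (n j)) (Fin (n j')) ℂ :=
      Matrix.of fun a b => -D ⟨j, a⟩ ⟨j', b⟩ with hC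
    have hslv_entry : ∀ (p q : (j : Fin k) × Fin (n j)) (h : p.1 ≠ q.1),
        slv D p q = Xs p.1 q.1 h (Matrix.of fun a b => -D ⟨p.1, a⟩ ⟨q.1, b⟩) p.2 q.2 := by
      intro p q h
      rw [hslvdef]
      simp only [Matrix.of_apply, dif_neg h]
    have h1 : (slv D * Ac 0) ⟨j, a⟩ ⟨j', b⟩ = (Xs j j' hjj' C * P j') a b := by
      rw [Matrix.mul_apply, ← Finset.univ_sigma_univ, Finset.sum_sigma]
      rw [Finset.sum_eq_single j']
      · rw [Matrix.mul_apply]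
        refine Finset.sum_congr rfl fun i _ => ?_
        rw [hslv_entry ⟨j, a⟩ ⟨j', i⟩ hjj', hA0]
        rfl
      · intro c _ hc
        refine Finset.sum_eq_zero fun i _ => ?_
        rw [hA0, hblock ⟨c, i⟩ ⟨j', b⟩ hc, mul_zero]
      · intro h; exact absurd (Finset.mem_univ j') h
    have h2 : (Ac 0 * slv D) ⟨j, a⟩ ⟨j', b⟩ = (P j * Xs j j' hjj' C) a b := by
      rw [Matrix.mul_apply, ← Finset.univ_sigma_univ, Finset.sum_sigma]
      rw [Finset.sum_eq_single j]
      · rw [Matrix.mul_apply]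
        refine Finset.sum_congr rfl fun i _ => ?_
        rw [hslv_entry ⟨j, i⟩ ⟨j', b⟩ hjj', hA0]
        rfl
      · intro c _ hc
        refine Finset.sum_eq_zero fun i _ => ?_
        rw [hA0, hblock ⟨j, a⟩ ⟨c, i⟩ (Ne.symm hc), zero_mul]
      · intro h; exact absurd (Finset.mem_univ j) h
    rw [Matrix.add_apply, Matrix.sub_apply, h1, h2, ← Matrix.sub_apply, hXs j j' hjj' C]
    simp [hC]
  -- the recursively constructed coefficients
  set Tc : ℕ → Matrix ((j : Fin k) × Fin (n j)) ((j : Fin k) × Fin (n j)) ℂ := fun m => (TBrec Ac slv m).1 with hTc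
  set Bc : ℕ → Matrix ((j : Fin k) × Fin (n j)) ((j : Fin k) × Fin (n j)) ℂ := fun m => (TBrec Ac slv m).2 with hBc
  have hT0 : Tc 0 = 1 := by show (TBrec Ac slv 0).1 = 1; rw [TBrec_zero]
  have hB0 : Bc 0 = Ac 0 := by show (TBrec Ac slv 0).2 = Ac 0; rw [TBrec_zero]
  have hBdiag : ∀ m (p q : (j : Fin k) × Fin (n j)), p.1 ≠ q.1 → Bc m p q = 0 := by
    intro m p q h
    cases m with
    | zero => rw [hB0, hA0]; exact hblock p q h
    | succ m =>
      show (TBrec Ac slv (m+1)).2 p q = 0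
      rw [TBrec_succ]
      exact hslv _ p q h
  -- the power series matrices
  set T : Matrix ((j : Fin k) × Fin (n j)) ((j : Fin k) × Fin (n j)) (PowerSeries ℂ) :=
    Matrix.of fun p q => PowerSeries.mk fun m => Tc m p q with hT
  set bps : Matrix ((j : Fin k) × Fin (n j)) ((j : Fin k) × Fin (n j)) (PowerSeries ℂ) :=
    Matrix.of fun p q => PowerSeries.mk fun m => Bc m p q with hbps
  set aps : Matrix ((j : Fin k) × Fin (n j)) ((j : Fin k) × Fin (n j)) (PowerSeries ℂ) :=
    Matrix.of fun p q => PowerSeries.mk fun m => Ac m p q with haps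
  have hTcoeff : ∀ (p q : (j : Fin k) × Fin (n j)) (m : ℕ), PowerSeries.coeff m (T p q) = Tc m p q :=
    fun p q m => by rw [hT]; simp
  have hbcoeff : ∀ (p q : (j : Fin k) × Fin (n j)) (m : ℕ), PowerSeries.coeff m (bps p q) = Bc m p q :=
    fun p q m => by rw [hbps]; simp
  have hacoeff : ∀ (p q : (j : Fin k) × Fin (n j)) (m : ℕ), PowerSeries.coeff m (aps p q) = Ac m p q :=
    fun p q m => by rw [haps]; simp
  -- the power series identity
  have hTa : T * aps = bps * T := by
    apply Matrix.ext
    intro p q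
    apply PowerSeries.ext
    intro d
    rw [coeff_mat_mul T aps Tc Ac hTcoeff hacoeff p q d,
      coeff_mat_mul bps T Bc Tc hbcoeff hTcoeff p q d]
    rw [hTc, hBc, TBrec_master Ac slv d]
  -- the Laurent series embedding
  set e := HahnSeries.ofPowerSeries ℤ ℂ with he
  have hAeq : ∀ p q : (j : Fin k) × Fin (n j), A p q = HahnSeries.single r 1 * e (aps p q) := by
    intro p q
    ext m
    rw [single_one_mul_coeff]
    by_cases hm : r ≤ m
    · have h1 : m - r = ((m - r).toNat : ℤ) := by omega
      rw [h1, he, HahnSeries.ofPowerSeries_apply_coeff, hacoeff, hAc_apply]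
      congr 1
      omega
    · rw [he, ofPowerSeries_coeff_neg _ _ (by omega), hord p q m (by omega)]
  set B : Matrix ((j : Fin k) × Fin (n j)) ((j : Fin k) × Fin (n j)) (LaurentSeries ℂ) :=
    Matrix.of fun p q => HahnSeries.single r 1 * e (bps p q) with hB
  refine ⟨T, ?_, ?_, B, ?_, ?_, ?_, ?_⟩
  · -- IsUnit T
    rw [Matrix.isUnit_iff_isUnit_det, PowerSeries.isUnit_iff_constantCoeff]
    have hmap : T.map (PowerSeries.constantCoeff) = 1 := by
      ext p q
      rw [Matrix.map_apply, hT]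
      simp only [Matrix.of_apply, PowerSeries.constantCoeff_mk]
      rw [hT0]
    rw [show PowerSeries.constantCoeff T.det = (T.map (PowerSeries.constantCoeff)).det from
      RingHom.map_det _ _, hmap, Matrix.det_one]
    exact isUnit_one
  · -- constant coefficient of T
    intro p q
    rw [hT]
    simp only [Matrix.of_apply, PowerSeries.constantCoeff_mk]
    rw [hT0, Matrix.one_apply]
  · -- the conjugation identity
    apply Matrix.ext
    intro p q
    rw [Matrix.mul_apply, Matrix.mul_apply]
    have hL : ∀ s : (j : Fin k) × Fin (n j), (T.map e) p s * A s q = HahnSeries.single r 1 * (e (T p s) * e (aps s q)) := by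
      intro s
      rw [Matrix.map_apply, hAeq s q, mul_left_comm]
    have hR : ∀ s : (j : Fin k) × Fin (n j), B p s * (T.map e) s q = HahnSeries.single r 1 * (e (bps p s) * e (T s q)) := by
      intro s
      rw [Matrix.map_apply, hB]
      simp only [Matrix.of_apply]
      rw [mul_assoc]
    rw [Finset.sum_congr rfl fun s _ => hL s, Finset.sum_congr rfl fun s _ => hR s,
      ← Finset.mul_sum, ← Finset.mul_sum]
    congr 1
    rw [show ∑ s : (j : Fin k) × Fin (n j), e (T p s) * e (aps s q) = e ((T * aps) p q) by
      rw [Matrix.mul_apply, map_sum]; exact Finset.sum_congr rfl fun s _ => (map_mul e _ _).symm]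
    rw [show ∑ s : (j : Fin k) × Fin (n j), e (bps p s) * e (T s q) = e ((bps * T) p q) by
      rw [Matrix.mul_apply, map_sum]; exact Finset.sum_congr rfl fun s _ => (map_mul e _ _).symm]
    rw [hTa]
  · -- off-diagonal blocks of B vanish
    intro p q h
    rw [hB]
    simp only [Matrix.of_apply]
    have : bps p q = 0 := by
      apply PowerSeries.ext
      intro m
      rw [hbcoeff p q m, hBdiag m p q h, map_zero]
    rw [this, map_zero, mul_zero]
  · -- B has no coefficients below r
    intro p q m hm
    rw [hB]
    simp only [Matrix.of_apply]
    rw [single_one_mul_coeff, he, ofPowerSeries_coeff_neg _ _ (by omega)]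
  · -- the leading coefficient of B
    intro p q _
    rw [hB]
    simp only [Matrix.of_apply]
    rw [single_one_mul_coeff, sub_self,
      show (0 : ℤ) = ((0 : ℕ) : ℤ) from rfl, he, HahnSeries.ofPowerSeries_apply_coeff,
      hbcoeff, hB0, hA0]
end

section
/- Let m be an integer, let D = diag(d_1, …, d_n) with d_1, …, d_n ∈ ℂ((t)) such that for all i ≠ j one has d_i − d_j ≠ 0 and ord(d_i − d_j) < m, and let G ∈ M(n, ℂ((t))) satisfy G − D ∈ t^m M(n, ℂ[[t]]) (i.e. every entry of G − D has order at least m). Then there exists T ∈ M(n, ℂ[[t]]), invertible over ℂ[[t]], such that T G T⁻¹ = diag(g_1, …, g_n) with g_i ∈ ℂ((t)) and g_i − d_i ∈ t^m ℂ[[t]] for each i; consequently det(y I_n − G) = ∏_{i=1}^n (y − g_i) in ℂ((t))[y]. -/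
open Polynomial

private lemma exists_fixed_point {R : Type*} [CommRing R] {ι : Type*}
    (F : (ι → PowerSeries R) → (ι → PowerSeries R))
    (hF : ∀ (N : ℕ) (Q Q' : ι → PowerSeries R),
      (∀ p, (PowerSeries.X : PowerSeries R) ^ N ∣ (Q p - Q' p)) →
      ∀ p, (PowerSeries.X : PowerSeries R) ^ (N + 1) ∣ (F Q p - F Q' p)) :
    ∃ Q, F Q = Q := by
  set Qs : ℕ → ι → PowerSeries R := fun s => F^[s] 0 with hQs
  have hiter : ∀ s, Qs (s + 1) = F (Qs s) := by
    intro s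
    rw [hQs]
    exact Function.iterate_succ_apply' F s 0
  have hstep : ∀ s p, (PowerSeries.X : PowerSeries R) ^ s ∣ Qs (s + 1) p - Qs s p := by
    intro s
    induction s with
    | zero => intro p; simp
    | succ s ih =>
      intro p
      have h := hF s (Qs (s + 1)) (Qs s) ih p
      rwa [← hiter (s + 1), ← hiter s] at h
  have hchain : ∀ s t, s ≤ t → ∀ p,
      (PowerSeries.X : PowerSeries R) ^ s ∣ Qs t p - Qs s p := by
    intro s t hst
    induction t, hst using Nat.le_induction with
    | base => intro p; simp
    | succ t hst ih =>
      intro p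
      have h1 := hstep t p
      have h2 : Qs (t + 1) p - Qs s p = (Qs (t + 1) p - Qs t p) + (Qs t p - Qs s p) := by ring
      rw [h2]
      exact dvd_add (dvd_trans (pow_dvd_pow _ hst) h1) (ih p)
  set Q : ι → PowerSeries R :=
    fun p => PowerSeries.mk fun k => PowerSeries.coeff k (Qs (k + 1) p) with hQdef
  have happrox : ∀ (N : ℕ) p, (PowerSeries.X : PowerSeries R) ^ N ∣ Q p - Qs N p := by
    intro N p
    rw [PowerSeries.X_pow_dvd_iff]
    intro k hk
    have h := hchain (k + 1) N (by omega) p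
    rw [PowerSeries.X_pow_dvd_iff] at h
    have h2 := h k (by omega)
    rw [map_sub] at h2 ⊢
    rw [hQdef]
    simp only [PowerSeries.coeff_mk]
    rw [sub_eq_zero] at h2 ⊢
    exact h2.symm
  refine ⟨Q, ?_⟩
  funext p
  have hdvd : ∀ N : ℕ, (PowerSeries.X : PowerSeries R) ^ N ∣ F Q p - Q p := by
    intro N
    have h1 := hF N Q (Qs N) (fun q => happrox N q) p
    rw [← hiter N] at h1
    have h2 := happrox (N + 1) p
    have h3 : F Q p - Q p = (F Q p - Qs (N + 1) p) - (Q p - Qs (N + 1) p) := by ring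
    rw [h3]
    exact dvd_sub (dvd_trans (pow_dvd_pow _ (by omega)) h1)
      (dvd_trans (pow_dvd_pow _ (by omega)) h2)
  have hz : F Q p - Q p = 0 := by
    ext k
    rw [map_zero]
    have h := hdvd (k + 1)
    rw [PowerSeries.X_pow_dvd_iff] at h
    exact h k (by omega)
  exact sub_eq_zero.mp hz

private lemma laurent_coe_coeff_neg (x : PowerSeries ℂ) (k : ℤ) (hk : k < 0) :
    (HahnSeries.ofPowerSeries ℤ ℂ x).coeff k = 0 := by
  rw [HahnSeries.ofPowerSeries_apply]
  apply HahnSeries.embDomain_notin_range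
  rintro ⟨a, ha⟩
  have ha' : ((a : ℕ) : ℤ) = k := ha
  omega

private lemma laurent_coe_coeff_nonneg (x : PowerSeries ℂ) (k : ℤ) (hk : 0 ≤ k) :
    (HahnSeries.ofPowerSeries ℤ ℂ x).coeff k = PowerSeries.coeff k.toNat x := by
  have h : k = ((k.toNat : ℕ) : ℤ) := by omega
  conv_lhs => rw [h]
  rw [HahnSeries.ofPowerSeries_apply_coeff]

private lemma laurent_factor (m : ℤ) (f : LaurentSeries ℂ) (hf : ∀ k < m, f.coeff k = 0) :
    f = HahnSeries.single m 1 *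
      HahnSeries.ofPowerSeries ℤ ℂ (PowerSeries.mk fun k => f.coeff (m + k)) := by
  ext k
  conv_rhs => rw [show k = k - m + m by omega]
  rw [HahnSeries.coeff_single_mul_add, one_mul]
  by_cases h : k - m < 0
  · rw [laurent_coe_coeff_neg _ _ h]
    exact hf k (by omega)
  · rw [laurent_coe_coeff_nonneg _ _ (by omega), PowerSeries.coeff_mk]
    congr 1
    omega

private lemma charpoly_conj {R : Type*} [CommRing R] {n : Type*} [Fintype n] [DecidableEq n]
    (P A D : Matrix n n R) (hP : IsUnit P) (h : P * A = D * P) :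
    A.charpoly = D.charpoly := by
  have hPc : IsUnit (P.map (Polynomial.C : R →+* R[X])) := by
    have := (RingHom.mapMatrix (Polynomial.C : R →+* R[X]) (m := n)).isUnit_map hP
    simpa [RingHom.mapMatrix_apply] using this
  have key : P.map Polynomial.C * Matrix.charmatrix A = Matrix.charmatrix D * P.map Polynomial.C := by
    unfold Matrix.charmatrix
    rw [Matrix.mul_sub, Matrix.sub_mul]
    congr 1
    · exact ((Matrix.scalar_commute Polynomial.X (fun r => Commute.all _ _)
        (P.map Polynomial.C)).eq).symm
    · rw [RingHom.mapMatrix_apply, RingHom.mapMatrix_apply, ← Matrix.map_mul, h, Matrix.map_mul]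
  have hdet : IsUnit (P.map (Polynomial.C : R →+* R[X])).det :=
    (Matrix.isUnit_iff_isUnit_det _).mp hPc
  have hdets := congrArg Matrix.det key
  rw [Matrix.det_mul, Matrix.det_mul, mul_comm (Matrix.charmatrix D).det] at hdets
  exact hdet.mul_left_cancel hdets

private lemma charpoly_diagonal_fin {R : Type*} [CommRing R] {n : ℕ} (g : Fin n → R) :
    (Matrix.diagonal g).charpoly = ∏ i, (Polynomial.X - Polynomial.C (g i)) := by
  show (Matrix.charmatrix (Matrix.diagonal g)).det = _
  have h : Matrix.charmatrix (Matrix.diagonal g)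
      = Matrix.diagonal fun i => Polynomial.X - Polynomial.C (g i) := by
    ext i j
    by_cases hij : i = j
    · subst hij
      rw [Matrix.charmatrix_apply_eq, Matrix.diagonal_apply_eq, Matrix.diagonal_apply_eq]
    · rw [Matrix.charmatrix_apply_ne _ _ _ hij, Matrix.diagonal_apply_ne _ hij,
        Matrix.diagonal_apply_ne _ hij, map_zero, neg_zero]
  rw [h, Matrix.det_diagonal]

private noncomputable def betaMap (n : ℕ) (α : Fin n → Fin n → PowerSeries ℂ)
    (Q : Fin n × Fin n → PowerSeries ℂ) (i j : Fin n) : PowerSeries ℂ :=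
  α i j + (∑ k, Q (i, k) * α k j) - (α i i + ∑ k, Q (i, k) * α k i) * Q (i, j)

private noncomputable def Fmap (n : ℕ) (α v : Fin n → Fin n → PowerSeries ℂ)
    (Q : Fin n × Fin n → PowerSeries ℂ) : Fin n × Fin n → PowerSeries ℂ :=
  fun p => if p.1 = p.2 then 0 else v p.1 p.2 * betaMap n α Q p.1 p.2

private lemma dvd_sub_mul_mul {R : Type*} [CommRing R] {x a b c d : R}
    (h1 : x ∣ a - b) (h2 : x ∣ c - d) : x ∣ a * c - b * d := by
  have h : a * c - b * d = a * (c - d) + (a - b) * d := by ring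
  rw [h]
  exact dvd_add (h2.mul_left a) (h1.mul_right d)

private lemma contraction (n : ℕ) (α v : Fin n → Fin n → PowerSeries ℂ)
    (hv : ∀ i j, i ≠ j → (PowerSeries.X : PowerSeries ℂ) ∣ v i j)
    (N : ℕ) (Q Q' : Fin n × Fin n → PowerSeries ℂ)
    (h : ∀ p, (PowerSeries.X : PowerSeries ℂ) ^ N ∣ Q p - Q' p) :
    ∀ p, (PowerSeries.X : PowerSeries ℂ) ^ (N + 1) ∣ Fmap n α v Q p - Fmap n α v Q' p := by
  rintro ⟨i, j⟩
  by_cases hij : i = j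
  · simp [Fmap, hij]
  · simp only [Fmap, if_neg hij]
    rw [← mul_sub, pow_succ']
    refine mul_dvd_mul (hv i j hij) ?_
    have hsum1 : (PowerSeries.X : PowerSeries ℂ) ^ N ∣
        (∑ k, Q (i, k) * α k j) - (∑ k, Q' (i, k) * α k j) := by
      rw [← Finset.sum_sub_distrib]
      exact Finset.dvd_sum fun k _ => by rw [← sub_mul]; exact (h (i, k)).mul_right _
    have hsum2 : (PowerSeries.X : PowerSeries ℂ) ^ N ∣
        (∑ k, Q (i, k) * α k i) - (∑ k, Q' (i, k) * α k i) := by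
      rw [← Finset.sum_sub_distrib]
      exact Finset.dvd_sum fun k _ => by rw [← sub_mul]; exact (h (i, k)).mul_right _
    have hγ : (PowerSeries.X : PowerSeries ℂ) ^ N ∣
        (α i i + ∑ k, Q (i, k) * α k i) - (α i i + ∑ k, Q' (i, k) * α k i) := by
      simpa using hsum2
    have hprod := dvd_sub_mul_mul hγ (h (i, j))
    have heq : betaMap n α Q i j - betaMap n α Q' i j
        = ((∑ k, Q (i, k) * α k j) - (∑ k, Q' (i, k) * α k j))
          - ((α i i + ∑ k, Q (i, k) * α k i) * Q (i, j)
            - (α i i + ∑ k, Q' (i, k) * α k i) * Q' (i, j)) := by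
      simp only [betaMap]; ring
    rw [heq]
    exact dvd_sub hsum1 hprod

/-- **Diagonalization of a perturbed diagonal matrix.**
Let `D = diag(d₁, …, dₙ)` over `ℂ((t))` with `dᵢ − dⱼ ≠ 0` and `ord(dᵢ − dⱼ) < m`
for all `i ≠ j`, and let `G` satisfy `G − D ∈ t^m M(n, ℂ[[t]])`.  Then there is `T`
over `ℂ[[t]]`, invertible over `ℂ[[t]]`, with `T G T⁻¹ = diag(g₁, …, gₙ)` where
`gᵢ − dᵢ ∈ t^m ℂ[[t]]`; consequently `det(y Iₙ − G) = ∏ᵢ (y − gᵢ)` in `ℂ((t))[y]`. -/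
theorem diagonalization_separated_diagonal
    (n : ℕ) (m : ℤ) (d : Fin n → LaurentSeries ℂ)
    (hd : ∀ i j, i ≠ j → d i - d j ≠ 0 ∧ (d i - d j).order < m)
    (G : Matrix (Fin n) (Fin n) (LaurentSeries ℂ))
    (hG : ∀ i j, ∀ k : ℤ, k < m → ((G - Matrix.diagonal d) i j).coeff k = 0) :
    ∃ T : Matrix (Fin n) (Fin n) (PowerSeries ℂ),
      IsUnit T ∧
      ∃ g : Fin n → LaurentSeries ℂ,
        T.map (HahnSeries.ofPowerSeries ℤ ℂ) * G
          = Matrix.diagonal g * T.map (HahnSeries.ofPowerSeries ℤ ℂ) ∧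
        (∀ i, ∀ k : ℤ, k < m → (g i - d i).coeff k = 0) ∧
        G.charpoly = ∏ i, (Polynomial.X - Polynomial.C (g i)) := by
  classical
  set φ := HahnSeries.ofPowerSeries ℤ ℂ with hφ
  set A : Fin n → Fin n → LaurentSeries ℂ := fun i j => (G - Matrix.diagonal d) i j with hAdef
  set α : Fin n → Fin n → PowerSeries ℂ :=
    fun i j => PowerSeries.mk fun k => (A i j).coeff (m + k) with hαdef
  have hA : ∀ i j, A i j = HahnSeries.single m 1 * φ (α i j) := fun i j =>
    laurent_factor m (A i j) (fun k hk => hG i j k hk)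
  set v : Fin n → Fin n → PowerSeries ℂ := fun i j =>
    if _ : i = j then 0
    else PowerSeries.X ^ (m - (d i - d j).order).toNat * ((d i - d j).powerSeriesPart)⁻¹
    with hvdef
  have hvX : ∀ i j, i ≠ j → (PowerSeries.X : PowerSeries ℂ) ∣ v i j := by
    intro i j hij
    rw [hvdef]
    simp only [dif_neg hij]
    refine Dvd.dvd.mul_right (dvd_pow_self _ ?_) _
    have := (hd i j hij).2
    omega
  have hv : ∀ i j, i ≠ j → φ (v i j) * (d i - d j) = HahnSeries.single m 1 := by
    intro i j hij
    have h0 : d i - d j ≠ 0 := (hd i j hij).1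
    have horder : (d i - d j).order < m := (hd i j hij).2
    have hu : PowerSeries.constantCoeff ((d i - d j).powerSeriesPart) ≠ 0 := by
      rw [← PowerSeries.coeff_zero_eq_constantCoeff_apply,
        LaurentSeries.powerSeriesPart_coeff, Nat.cast_zero, add_zero]
      exact HahnSeries.coeff_order_eq_zero.not.mpr h0
    have hmul : ((d i - d j).powerSeriesPart)⁻¹ * (d i - d j).powerSeriesPart = 1 :=
      PowerSeries.inv_mul_cancel _ hu
    have hone : (HahnSeries.single (0 : ℤ) (1 : ℂ) : LaurentSeries ℂ) = 1 := rfl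
    have hu1 : φ (((d i - d j).powerSeriesPart)⁻¹) * (d i - d j)
        = HahnSeries.single (d i - d j).order 1 := by
      calc φ (((d i - d j).powerSeriesPart)⁻¹) * (d i - d j)
          = (HahnSeries.single (d i - d j).order (1 : ℂ)
              * HahnSeries.single (-(d i - d j).order) (1 : ℂ))
            * (φ (((d i - d j).powerSeriesPart)⁻¹) * (d i - d j)) := by
            rw [HahnSeries.single_mul_single, add_neg_cancel, one_mul, hone, one_mul]
        _ = HahnSeries.single (d i - d j).order (1 : ℂ)
            * (φ (((d i - d j).powerSeriesPart)⁻¹)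
              * (HahnSeries.single (-(d i - d j).order) (1 : ℂ) * (d i - d j))) := by ring
        _ = HahnSeries.single (d i - d j).order (1 : ℂ)
            * (φ (((d i - d j).powerSeriesPart)⁻¹) * φ ((d i - d j).powerSeriesPart)) := by
            rw [hφ, ← LaurentSeries.ofPowerSeries_powerSeriesPart]
        _ = HahnSeries.single (d i - d j).order 1 := by
            rw [← map_mul, hmul, map_one φ, mul_one]
    rw [hvdef]
    simp only [dif_neg hij]
    rw [map_mul, hφ, HahnSeries.ofPowerSeries_X_pow, mul_assoc, ← hφ, hu1,
      HahnSeries.single_mul_single, one_mul,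
      show (((m - (d i - d j).order).toNat : ℤ) + (d i - d j).order) = m by omega]
  obtain ⟨Q, hQ⟩ := exists_fixed_point (Fmap n α v)
    (fun N Q Q' h => contraction n α v hvX N Q Q' h)
  have hQdiag : ∀ i, Q (i, i) = 0 := by
    intro i
    conv_lhs => rw [← hQ]
    simp [Fmap]
  have hQoff : ∀ i j, i ≠ j → Q (i, j) = v i j * betaMap n α Q i j := by
    intro i j hij
    conv_lhs => rw [← hQ]
    simp [Fmap, hij]
  have hQ0 : ∀ p, PowerSeries.constantCoeff (Q p) = 0 := by
    rintro ⟨i, j⟩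
    by_cases hij : i = j
    · rw [hij, hQdiag, map_zero]
    · rw [hQoff i j hij]
      obtain ⟨w, hw⟩ := hvX i j hij
      rw [hw, mul_assoc, map_mul, PowerSeries.constantCoeff_X, zero_mul]
  set T : Matrix (Fin n) (Fin n) (PowerSeries ℂ) :=
    1 + Matrix.of (fun i j => Q (i, j)) with hT
  have hTunit : IsUnit T := by
    rw [Matrix.isUnit_iff_isUnit_det, PowerSeries.isUnit_iff_constantCoeff]
    have h1 : (PowerSeries.constantCoeff) T.det
        = (T.map (PowerSeries.constantCoeff)).det := RingHom.map_det _ _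
    have h2 : T.map (PowerSeries.constantCoeff) = 1 := by
      ext i j
      simp [hT, Matrix.map_apply, Matrix.add_apply, Matrix.one_apply, hQ0 (i, j),
        apply_ite (PowerSeries.constantCoeff)]
    rw [h1, h2, Matrix.det_one]
    exact isUnit_one
  set g : Fin n → LaurentSeries ℂ :=
    fun i => d i + A i i + ∑ k, φ (Q (i, k)) * A k i with hgdef
  have hTφ : T.map φ = 1 + (Matrix.of fun i j => Q (i, j)).map φ := by
    rw [hT]
    ext i j
    by_cases hij : i = j <;>
      simp [Matrix.map_apply, Matrix.add_apply, Matrix.one_apply, hij]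
  have hGsplit : ∀ a b, G a b = Matrix.diagonal d a b + A a b := by
    intro a b
    rw [hAdef]
    simp
  have hsumA : ∀ i j', ∑ k, φ (Q (i, k)) * A k j'
      = HahnSeries.single m 1 * φ (∑ k, Q (i, k) * α k j') := by
    intro i j'
    rw [map_sum, Finset.mul_sum]
    refine Finset.sum_congr rfl fun k _ => ?_
    rw [hA k j', map_mul]
    ring
  have hMcoeff : ∀ (x : PowerSeries ℂ) (k : ℤ), k < m →
      (HahnSeries.single m (1 : ℂ) * φ x).coeff k = 0 := by
    intro x k hk
    conv_lhs => rw [show k = k - m + m by omega]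
    rw [HahnSeries.coeff_single_mul_add, one_mul, hφ]
    exact laurent_coe_coeff_neg x _ (by omega)
  have hmatrix : T.map φ * G = Matrix.diagonal g * T.map φ := by
    rw [← Matrix.ext_iff]
    intro i j
    have hsum_split : ∑ k, φ (Q (i, k)) * G k j
        = φ (Q (i, j)) * d j + ∑ k, φ (Q (i, k)) * A k j := by
      calc ∑ k, φ (Q (i, k)) * G k j
          = ∑ k, (φ (Q (i, k)) * Matrix.diagonal d k j + φ (Q (i, k)) * A k j) := by
            refine Finset.sum_congr rfl fun k _ => ?_
            rw [hGsplit k j]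
            ring
        _ = (∑ k, φ (Q (i, k)) * Matrix.diagonal d k j) + ∑ k, φ (Q (i, k)) * A k j :=
            Finset.sum_add_distrib
        _ = φ (Q (i, j)) * d j + ∑ k, φ (Q (i, k)) * A k j := by
            congr 1
            rw [Finset.sum_eq_single j]
            · rw [Matrix.diagonal_apply_eq]
            · intro k _ hk
              rw [Matrix.diagonal_apply_ne _ hk, mul_zero]
            · intro h
              exact absurd (Finset.mem_univ j) h
    have lhs_eq : (T.map φ * G) i j
        = Matrix.diagonal d i j + A i j
          + (φ (Q (i, j)) * d j + ∑ k, φ (Q (i, k)) * A k j) := by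
      rw [hTφ, Matrix.add_mul, Matrix.one_mul, Matrix.add_apply, Matrix.mul_apply]
      simp only [Matrix.map_apply, Matrix.of_apply]
      rw [hGsplit i j, hsum_split]
    have rhs_eq : (Matrix.diagonal g * T.map φ) i j
        = Matrix.diagonal g i j + g i * φ (Q (i, j)) := by
      rw [hTφ, Matrix.mul_add, Matrix.mul_one, Matrix.add_apply, Matrix.diagonal_mul]
      simp only [Matrix.map_apply, Matrix.of_apply]
    rw [lhs_eq, rhs_eq]
    by_cases hij : i = j
    · subst hij
      rw [Matrix.diagonal_apply_eq, Matrix.diagonal_apply_eq, hQdiag i, map_zero, hgdef]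
      simp only
      ring
    · rw [Matrix.diagonal_apply_ne _ hij, Matrix.diagonal_apply_ne _ hij, hgdef]
      simp only
      rw [hA i j, hA i i, hsumA i j, hsumA i i]
      have hbg : betaMap n α Q i j + (α i i + ∑ k, Q (i, k) * α k i) * Q (i, j)
          = α i j + ∑ k, Q (i, k) * α k j := by
        simp only [betaMap]
        ring
      have hbgφ := congrArg φ hbg
      simp only [map_add, map_mul] at hbgφ
      have key : (d i - d j) * φ (Q (i, j))
          = HahnSeries.single m 1 * φ (betaMap n α Q i j) := by
        rw [hQoff i j hij, map_mul, ← mul_assoc, mul_comm (d i - d j) (φ (v i j)),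
          hv i j hij]
      have hbgφ' : HahnSeries.single m (1 : ℂ)
            * (φ (betaMap n α Q i j)
              + (φ (α i i) + φ (∑ k, Q (i, k) * α k i)) * φ (Q (i, j)))
          = HahnSeries.single m (1 : ℂ)
            * (φ (α i j) + φ (∑ k, Q (i, k) * α k j)) := by rw [hbgφ]
      linear_combination -key - hbgφ'
  refine ⟨T, hTunit, g, hmatrix, ?_, ?_⟩
  · intro i k hk
    have hgi : g i - d i = HahnSeries.single m 1 * φ (α i i + ∑ k, Q (i, k) * α k i) := by
      rw [hgdef]
      simp only
      rw [hA i i, hsumA i i, map_add, mul_add]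
      ring
    rw [hgi]
    exact hMcoeff _ k hk
  · have hTφunit : IsUnit (T.map φ) := by
      have := (RingHom.mapMatrix φ (m := Fin n)).isUnit_map hTunit
      simpa [RingHom.mapMatrix_apply] using this
    rw [charpoly_conj (T.map φ) G (Matrix.diagonal g) hTφunit hmatrix]
    exact charpoly_diagonal_fin g
end

section
/- Let p_1, …, p_n be pairwise distinct elements of t⁻¹ℂ[t⁻¹], let G ∈ M(n, ℂ((t^s))), and suppose det(y I_n − G) = ∏_{i=1}^n (y − g_i) in ℂ((t))[y] with g_i ∈ ℂ((t)) satisfying pr⁻(z · g_i) = p_i for each i, where z = t^s. Then the automorphism ξ permutes the roots compatibly with the principal parts: there is a permutation σ of {1, …, n} such that ξ(g_i) = g_{σ(i)} and p_{σ(i)} = ξ(p_i) for all i. Consequently, if r_i denotes the least positive integer with ξ^{r_i}(p_i) = p_i (so r_i divides s), then ξ^{r_i}(g_i) = g_i, i.e. g_i lies in the subfield ℂ((t^{s/r_i})), and the ξ-orbit of g_i consists of exactly the r_i elements g_i, ξ(g_i), …, ξ^{r_i−1}(g_i). -/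
open Polynomial

/-- **Galois action on the roots of the characteristic polynomial.**
Let `ξ` be the automorphism of `ℂ((t))` multiplying the `k`-th coefficient by `ζ^k`,
`ζ = exp(2πi/s)`.  Let `p₁, …, pₙ ∈ t⁻¹ℂ[t⁻¹]` be pairwise distinct, let `G` be a
matrix over the subfield `ℂ((t^s))`, and suppose `det(y Iₙ − G) = ∏ᵢ (y − gᵢ)` with
`pr⁻(z·gᵢ) = pᵢ` (`z = t^s`).  Then `ξ` permutes the roots compatibly with the
principal parts: there is a permutation `σ` with `ξ(gᵢ) = g_{σ(i)}` and
`p_{σ(i)} = ξ(pᵢ)`.  Consequently, if `r` is the least positive integer with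
`ξ^r(pᵢ) = pᵢ`, then `r ∣ s`, `ξ^r(gᵢ) = gᵢ`, `gᵢ ∈ ℂ((t^{s/r}))`, and the `ξ`-orbit
of `gᵢ` consists of exactly the `r` distinct elements `gᵢ, ξ(gᵢ), …, ξ^{r−1}(gᵢ)`. -/
theorem galois_orbits_of_roots
    (n s : ℕ) (hs : 0 < s)
    (ξ : LaurentSeries ℂ ≃+* LaurentSeries ℂ)
    (hξ : ∀ f : LaurentSeries ℂ, ∀ k : ℤ,
      (ξ f).coeff k = Complex.exp (2 * (Real.pi : ℂ) * Complex.I / (s : ℂ)) ^ k * f.coeff k)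
    (p : Fin n → LaurentSeries ℂ)
    (hp : ∀ i, ∀ k : ℤ, 0 ≤ k → (p i).coeff k = 0)
    (hpdist : Function.Injective p)
    (G : Matrix (Fin n) (Fin n) (LaurentSeries ℂ))
    (hG : ∀ i j, ∀ k : ℤ, ¬ ((s : ℤ) ∣ k) → (G i j).coeff k = 0)
    (g : Fin n → LaurentSeries ℂ)
    (hfact : G.charpoly = ∏ i, (Polynomial.X - Polynomial.C (g i)))
    (hpr : ∀ i, ∀ k : ℤ, k < 0 →
      (HahnSeries.single (s : ℤ) (1 : ℂ) * g i - p i).coeff k = 0) :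
    (∃ σ : Equiv.Perm (Fin n), ∀ i, ξ (g i) = g (σ i) ∧ p (σ i) = ξ (p i)) ∧
    ∀ i : Fin n, ∀ r : ℕ, 0 < r → (⇑ξ)^[r] (p i) = p i →
      (∀ m : ℕ, 0 < m → m < r → (⇑ξ)^[m] (p i) ≠ p i) →
      r ∣ s ∧
      (⇑ξ)^[r] (g i) = g i ∧
      (∀ k : ℤ, ¬ (((s / r : ℕ) : ℤ) ∣ k) → (g i).coeff k = 0) ∧
      Set.range (fun m : ℕ => (⇑ξ)^[m] (g i))
        = (fun j : ℕ => (⇑ξ)^[j] (g i)) '' Set.Iio r ∧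
      Set.InjOn (fun j : ℕ => (⇑ξ)^[j] (g i)) (Set.Iio r) := by
  classical
  set ζ : ℂ := Complex.exp (2 * (Real.pi : ℂ) * Complex.I / (s : ℂ)) with hζdef
  have hprim : IsPrimitiveRoot ζ s := Complex.isPrimitiveRoot_exp s hs.ne'
  have hζne : ζ ≠ 0 := Complex.exp_ne_zero _
  have honeiff : ∀ k : ℤ, ζ ^ k = 1 ↔ (s:ℤ) ∣ k := fun k => hprim.zpow_eq_one_iff_dvd k
  -- `ξ` fixes every series supported on multiples of `s`
  have hfix : ∀ f : LaurentSeries ℂ, (∀ k : ℤ, ¬ ((s:ℤ) ∣ k) → f.coeff k = 0) → ξ f = f := by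
    intro f hf
    ext k
    rw [hξ]
    by_cases hk : (s:ℤ) ∣ k
    · rw [(honeiff k).mpr hk, one_mul]
    · rw [hf k hk, mul_zero]
  have hz : ξ (HahnSeries.single (s:ℤ) (1:ℂ)) = HahnSeries.single (s:ℤ) (1:ℂ) := by
    apply hfix
    intro k hk
    rw [HahnSeries.coeff_single]
    split_ifs with h
    · exact absurd (h ▸ dvd_refl _) hk
    · rfl
  -- `g` is injective since the principal parts are pairwise distinct
  have hginj : Function.Injective g := by
    intro i j hij
    apply hpdist
    ext k
    rcases lt_or_ge k 0 with hk | hk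
    · have h1 := hpr i k hk
      have h2 := hpr j k hk
      rw [hij] at h1
      rw [HahnSeries.coeff_sub, sub_eq_zero] at h1 h2
      rw [← h1, ← h2]
    · rw [hp i k hk, hp j k hk]
  -- `ξ` fixes `G`, hence its characteristic polynomial
  have hGmap : G.map (ξ : LaurentSeries ℂ →+* LaurentSeries ℂ) = G := by
    apply Matrix.ext
    intro i j
    rw [Matrix.map_apply]
    exact hfix _ (hG i j)
  have hprodeq : (∏ i, (X - C (ξ (g i)))) = ∏ i, (X - C (g i)) := by
    calc (∏ i, (X - C (ξ (g i))))
        = Polynomial.map (ξ : LaurentSeries ℂ →+* LaurentSeries ℂ) (∏ i, (X - C (g i))) := by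
          rw [Polynomial.map_prod]
          simp [Polynomial.map_sub]
      _ = Polynomial.map _ G.charpoly := by rw [hfact]
      _ = (G.map (ξ : LaurentSeries ℂ →+* LaurentSeries ℂ)).charpoly :=
            (Matrix.charpoly_map G _).symm
      _ = G.charpoly := by rw [hGmap]
      _ = _ := hfact
  -- every `ξ (g i)` is again some `g j`
  have hmem : ∀ i, ∃ j, ξ (g i) = g j := by
    intro i
    have h0 : (∏ j, (ξ (g i) - g j)) = 0 := by
      have := congrArg (Polynomial.eval (ξ (g i))) hprodeq
      simp only [Polynomial.eval_prod, Polynomial.eval_sub, Polynomial.eval_X,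
        Polynomial.eval_C] at this
      rw [← this]
      exact Finset.prod_eq_zero (Finset.mem_univ i) (by simp)
    obtain ⟨j, -, hj⟩ := Finset.prod_eq_zero_iff.mp h0
    exact ⟨j, by rwa [sub_eq_zero] at hj⟩
  choose f hf using hmem
  have hfinj : Function.Injective f := by
    intro i j hij
    have : ξ (g i) = ξ (g j) := by rw [hf, hf, hij]
    exact hginj (ξ.injective this)
  let σ : Equiv.Perm (Fin n) := Equiv.ofBijective f (Finite.injective_iff_bijective.mp hfinj)
  have hσ : ∀ i, ξ (g i) = g (σ i) := fun i => hf i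
  -- the permutation is compatible with the principal parts
  have hpσ : ∀ i, p (σ i) = ξ (p i) := by
    intro i
    ext k
    rcases lt_or_ge k 0 with hk | hk
    · have h1 := hpr (σ i) k hk
      have h2 := hpr i k hk
      rw [HahnSeries.coeff_sub, sub_eq_zero] at h1 h2
      have hzg : HahnSeries.single (s:ℤ) (1:ℂ) * g (σ i)
          = ξ (HahnSeries.single (s:ℤ) (1:ℂ) * g i) := by
        rw [map_mul, hz, hσ]
      rw [← h1, hzg, hξ, h2, ← hξ]
    · rw [hp (σ i) k hk, hξ, hp i k hk, mul_zero]
  refine ⟨⟨σ, fun i => ⟨hσ i, hpσ i⟩⟩, ?_⟩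
  -- iterates act on coefficients by `ζ^(m*k)`
  have hiter : ∀ (m : ℕ) (f : LaurentSeries ℂ) (k : ℤ),
      ((⇑ξ)^[m] f).coeff k = ζ ^ ((m : ℤ) * k) * f.coeff k := by
    intro m
    induction m with
    | zero => intro f k; simp
    | succ m ih =>
      intro f k
      rw [Function.iterate_succ_apply', hξ, ih]
      rw [← mul_assoc, ← zpow_add₀ hζne]
      congr 2
      push_cast
      ring
  -- orbits under `σ`
  have horb : ∀ (i : Fin n) (m : ℕ),
      (⇑ξ)^[m] (g i) = g ((σ ^ m) i) ∧ (⇑ξ)^[m] (p i) = p ((σ ^ m) i) := by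
    intro i m
    induction m with
    | zero => simp
    | succ m ih =>
      constructor
      · rw [Function.iterate_succ_apply', ih.1, hσ, pow_succ', Equiv.Perm.mul_apply]
      · rw [Function.iterate_succ_apply', ih.2, ← hpσ, pow_succ', Equiv.Perm.mul_apply]
  intro i r hr hfixr hmin
  -- `ξ^[s]` fixes everything
  have hS : ∀ f : LaurentSeries ℂ, (⇑ξ)^[s] f = f := by
    intro f
    ext k
    rw [hiter]
    rw [(honeiff _).mpr ⟨k, rfl⟩, one_mul]
  have hrdvd : r ∣ s := by
    have hmod : (⇑ξ)^[s % r] (p i) = p i := by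
      have h1 : (⇑ξ)^[r * (s / r)] (p i) = p i := by
        rw [Function.iterate_mul]
        exact Function.iterate_fixed hfixr _
      calc (⇑ξ)^[s % r] (p i) = (⇑ξ)^[s % r] ((⇑ξ)^[r * (s / r)] (p i)) := by rw [h1]
        _ = (⇑ξ)^[s % r + r * (s / r)] (p i) := (Function.iterate_add_apply _ _ _ _).symm
        _ = (⇑ξ)^[s] (p i) := by rw [Nat.mod_add_div s r]
        _ = p i := hS _
    by_contra hnd
    have h2 : 0 < s % r := Nat.pos_of_ne_zero fun h => hnd (Nat.dvd_of_mod_eq_zero h)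
    exact hmin _ h2 (Nat.mod_lt _ hr) hmod
  have hσr : (σ ^ r) i = i := by
    apply hpdist
    rw [← (horb i r).2, hfixr]
  have hgr : (⇑ξ)^[r] (g i) = g i := by rw [(horb i r).1, hσr]
  refine ⟨hrdvd, hgr, ?_, ?_, ?_⟩
  · intro k hk
    by_contra hne
    have := congrArg (fun f : LaurentSeries ℂ => f.coeff k) hgr
    simp only [hiter] at this
    have h1 : ζ ^ ((r : ℤ) * k) = 1 := by
      have h2 : ζ ^ ((r : ℤ) * k) * (g i).coeff k = 1 * (g i).coeff k := by
        rw [one_mul]; exact this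
      exact mul_right_cancel₀ hne h2
    have h2 : (s : ℤ) ∣ (r : ℤ) * k := (honeiff _).mp h1
    obtain ⟨c, hc⟩ := hrdvd
    apply hk
    obtain ⟨m, hm⟩ := h2
    have hrne : (r : ℤ) ≠ 0 := Int.natCast_ne_zero.mpr hr.ne'
    refine ⟨m, ?_⟩
    have hsc : (s : ℤ) = (r : ℤ) * (c : ℤ) := by exact_mod_cast hc
    have hcd : ((s / r : ℕ) : ℤ) = (c : ℤ) := by
      rw [hc, Nat.mul_div_cancel_left _ hr]
    rw [hcd]
    have : (r : ℤ) * k = (r : ℤ) * ((c : ℤ) * m) := by rw [hm, hsc]; ring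
    exact mul_left_cancel₀ hrne this
  · apply Set.Subset.antisymm
    · rintro x ⟨m, rfl⟩
      refine ⟨m % r, Nat.mod_lt _ hr, ?_⟩
      show (⇑ξ)^[m % r] (g i) = (⇑ξ)^[m] (g i)
      conv_rhs => rw [← Nat.mod_add_div m r, Function.iterate_add_apply,
        Function.iterate_mul, Function.iterate_fixed hgr]
    · rintro x ⟨m, -, rfl⟩
      exact ⟨m, rfl⟩
  · have key : ∀ j j' : ℕ, j ≤ j' → j' < r →
        (⇑ξ)^[j] (g i) = (⇑ξ)^[j'] (g i) → j = j' := by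
      intro j j' hle hlt heq
      by_contra hne
      have hd : 0 < j' - j := Nat.sub_pos_of_lt (lt_of_le_of_ne hle hne)
      have heq2 : (⇑ξ)^[j' - j] (g i) = g i := by
        have : (⇑ξ)^[j] ((⇑ξ)^[j' - j] (g i)) = (⇑ξ)^[j] (g i) := by
          rw [← Function.iterate_add_apply, Nat.add_sub_cancel' hle, heq]
        exact (Function.Injective.iterate ξ.injective j) this
      have hσd : (σ ^ (j' - j)) i = i := hginj (by rw [← (horb i _).1, heq2])
      have : (⇑ξ)^[j' - j] (p i) = p i := by rw [(horb i _).2, hσd]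
      exact hmin _ hd (lt_of_le_of_lt (Nat.sub_le _ _) hlt) this
    intro j hj j' hj' heq
    rcases le_total j j' with h | h
    · exact key j j' h hj' heq
    · exact (key j' j h hj heq.symm).symm
end

section
/- Let G ∈ M(n, ℂ((z))) and let q_1, …, q_n ∈ ℂ[z⁻¹] be pairwise distinct. Suppose there exists X ∈ M(n, ℂ[[z]]), invertible over ℂ[[z]], such that X G X⁻¹ + X′ X⁻¹ = diag(q_1, …, q_n) · z⁻¹ in M(n, ℂ((z))), where X′ is the entrywise formal derivative of X. Then the characteristic polynomial of G factors completely over ℂ((z)): det(y I_n − G) = ∏_{i=1}^n (y − g_i) in ℂ((z))[y], where g_i ∈ ℂ((z)) satisfies g_i − q_i · z⁻¹ ∈ ℂ[[z]] for each i = 1, …, n. -/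
open Polynomial

namespace RSAux

noncomputable section

abbrev Mat (n : ℕ) := Matrix (Fin n) (Fin n) (PowerSeries ℂ)

variable {n : ℕ}

/-! ### Generic coefficientwise fixed point construction -/

noncomputable def wc (Φ : Mat n → Mat n) : ℕ → Matrix (Fin n) (Fin n) ℂ
  | m => Matrix.of fun i j => PowerSeries.coeff m
      ((Φ (Matrix.of fun i' j' => PowerSeries.mk fun k =>
          if h : k < m then wc Φ k i' j' else 0)) i j)
  termination_by m => m

noncomputable def Wfix (Φ : Mat n → Mat n) : Mat n :=
  Matrix.of fun i j => PowerSeries.mk fun m => wc Φ m i j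

theorem Wfix_coeff (Φ : Mat n → Mat n) (m : ℕ) (i j : Fin n) :
    PowerSeries.coeff m (Wfix Φ i j) = wc Φ m i j := by
  simp [Wfix]

theorem fixed (Φ : Mat n → Mat n)
    (Hc : ∀ (m : ℕ) (W₁ W₂ : Mat n),
      (∀ i j, (PowerSeries.X : PowerSeries ℂ) ^ m ∣ (W₁ i j - W₂ i j)) →
      ∀ i j, (PowerSeries.X : PowerSeries ℂ) ^ (m+1) ∣ (Φ W₁ i j - Φ W₂ i j)) :
    Φ (Wfix Φ) = Wfix Φ := by
  ext i j m
  have key := Hc m (Matrix.of fun i' j' => PowerSeries.mk fun k =>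
      if h : k < m then wc Φ k i' j' else 0) (Wfix Φ) ?_ i j
  · have h1 := (PowerSeries.X_pow_dvd_iff.mp key) m (Nat.lt_succ_self m)
    rw [map_sub, sub_eq_zero] at h1
    have h2 : PowerSeries.coeff m (Wfix Φ i j) = wc Φ m i j := Wfix_coeff Φ m i j
    rw [h2, ← h1]
    conv_rhs => rw [wc]
    rfl
  · intro i' j'
    rw [PowerSeries.X_pow_dvd_iff]
    intro k hk
    rw [map_sub, Wfix_coeff]
    simp [hk]

/-! ### divisibility helpers -/

theorem dvd_mul_sub_mul {c a b x y : PowerSeries ℂ} (h1 : c ∣ a - b) (h2 : c ∣ x - y) :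
    c ∣ a * x - b * y := by
  have : a * x - b * y = a * (x - y) + (a - b) * y := by ring
  rw [this]
  exact dvd_add (Dvd.dvd.mul_left h2 a) (Dvd.dvd.mul_right h1 y)

theorem dvd_mul_entry {c : PowerSeries ℂ} {Q M : Mat n} (h : ∀ i j, c ∣ M i j) (i j : Fin n) :
    c ∣ (Q * M) i j := by
  rw [Matrix.mul_apply]
  exact Finset.dvd_sum fun k _ => Dvd.dvd.mul_left (h k j) _

/-! ### The specific contraction -/

noncomputable def innerM (Q W : Mat n) : Mat n :=
  Q * (1 + W) + W * Matrix.diagonal (fun j => -((Q * (1 + W)) j j))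

noncomputable def Phi (Q β : Mat n) (W : Mat n) : Mat n :=
  Matrix.of fun i j => β i j * innerM Q W i j

theorem inner_apply (Q W : Mat n) (i j : Fin n) :
    innerM Q W i j = (Q * (1 + W)) i j + W i j * (-((Q * (1 + W)) j j)) := by
  simp [innerM, Matrix.add_apply, Matrix.mul_diagonal]

theorem phi_causal (Q β : Mat n) (hβ : ∀ i j, (PowerSeries.X : PowerSeries ℂ) ∣ β i j)
    (m : ℕ) (W₁ W₂ : Mat n)
    (h : ∀ i j, (PowerSeries.X : PowerSeries ℂ) ^ m ∣ (W₁ i j - W₂ i j)) :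
    ∀ i j, (PowerSeries.X : PowerSeries ℂ) ^ (m+1) ∣ (Phi Q β W₁ i j - Phi Q β W₂ i j) := by
  have hQ : ∀ i j, (PowerSeries.X : PowerSeries ℂ) ^ m ∣
      ((Q * (1 + W₁)) i j - (Q * (1 + W₂)) i j) := by
    intro i j
    have e : (Q * (1 + W₁)) i j - (Q * (1 + W₂)) i j = (Q * (W₁ - W₂)) i j := by
      rw [← Matrix.sub_apply, ← Matrix.mul_sub]
      have e2 : (1 + W₁) - (1 + W₂) = W₁ - W₂ := by abel
      rw [e2]
    rw [e]
    exact dvd_mul_entry (fun a b => by rw [Matrix.sub_apply]; exact h a b) i j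
  have hinner : ∀ i j, (PowerSeries.X : PowerSeries ℂ) ^ m ∣
      (innerM Q W₁ i j - innerM Q W₂ i j) := by
    intro i j
    rw [inner_apply, inner_apply]
    have : (Q * (1 + W₁)) i j + W₁ i j * (-((Q * (1 + W₁)) j j))
         - ((Q * (1 + W₂)) i j + W₂ i j * (-((Q * (1 + W₂)) j j)))
        = ((Q * (1 + W₁)) i j - (Q * (1 + W₂)) i j)
          + (W₁ i j * (-((Q * (1 + W₁)) j j)) - W₂ i j * (-((Q * (1 + W₂)) j j))) := by ring
    rw [this]
    refine dvd_add (hQ i j) (dvd_mul_sub_mul (h i j) ?_)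
    have : -((Q * (1 + W₁)) j j) - -((Q * (1 + W₂)) j j)
        = -(((Q * (1 + W₁)) j j) - ((Q * (1 + W₂)) j j)) := by ring
    rw [this]
    exact dvd_neg.mpr (hQ j j)
  intro i j
  have e : Phi Q β W₁ i j - Phi Q β W₂ i j = β i j * (innerM Q W₁ i j - innerM Q W₂ i j) := by
    simp [Phi, mul_sub]
  rw [e, pow_succ']
  exact mul_dvd_mul (hβ i j) (hinner i j)

/-! ### Laurent series lemmas -/

theorem of_coeff_neg (f : PowerSeries ℂ) (k : ℤ) (hk : k < 0) :
    ((HahnSeries.ofPowerSeries ℤ ℂ) f).coeff k = 0 := by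
  rw [HahnSeries.ofPowerSeries_apply]
  refine HahnSeries.embDomain_notin_range ?_
  rintro ⟨m, hm⟩
  change ((m : ℕ) : ℤ) = k at hm
  omega

theorem exists_beta (a : LaurentSeries ℂ) (ha : a ≠ 0)
    (hneg : ∀ k : ℤ, 0 ≤ k → a.coeff k = 0) :
    ∃ β : PowerSeries ℂ, (PowerSeries.X : PowerSeries ℂ) ∣ β ∧
      (HahnSeries.ofPowerSeries ℤ ℂ) β * a = 1 := by
  have hb : a⁻¹ ≠ 0 := inv_ne_zero ha
  have hmul : a * a⁻¹ = 1 := mul_inv_cancel₀ ha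
  have horder : a.order + (a⁻¹).order = 0 := by
    rw [← HahnSeries.order_mul ha hb, hmul, HahnSeries.order_one]
  have haord : a.order ≤ -1 := by
    by_contra hcon
    push_neg at hcon
    have h0 : (0:ℤ) ≤ a.order := by omega
    exact ha (HahnSeries.coeff_order_eq_zero.mp (hneg _ h0))
  have hbord : 1 ≤ (a⁻¹).order := by omega
  have hbneg : ∀ k : ℤ, k ≤ 0 → (a⁻¹).coeff k = 0 := by
    intro k hk
    exact HahnSeries.coeff_eq_zero_of_lt_order (by omega)
  refine ⟨PowerSeries.mk fun m => (a⁻¹).coeff (m : ℤ), ?_, ?_⟩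
  · rw [PowerSeries.X_dvd_iff]
    simpa using hbneg 0 le_rfl
  · have hofb : (HahnSeries.ofPowerSeries ℤ ℂ) (PowerSeries.mk fun m => (a⁻¹).coeff (m : ℤ))
        = a⁻¹ := by
      ext k
      rcases le_or_gt 0 k with hk | hk
      · have : k = ((k.toNat : ℕ) : ℤ) := by omega
        rw [this, HahnSeries.ofPowerSeries_apply_coeff, PowerSeries.coeff_mk]
      · rw [of_coeff_neg _ _ hk, hbneg k (le_of_lt hk)]
    rw [hofb, inv_mul_cancel₀ ha]

/-! ### charpoly lemmas -/

theorem charpoly_similar {R : Type*} [CommRing R] {n : ℕ}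
    (M N P : Matrix (Fin n) (Fin n) R) (hM : IsUnit M.det) (hcomm : N * M = M * P) :
    N.charpoly = P.charpoly := by
  have hMN : M * M⁻¹ = 1 := Matrix.mul_nonsing_inv M hM
  have h : N = M * P * M⁻¹ := by
    rw [← hcomm, Matrix.mul_assoc, hMN, Matrix.mul_one]
  have hcm : Matrix.charmatrix N =
      (M.map C) * Matrix.charmatrix P * (M⁻¹.map C) := by
    have hmap : ∀ (A B : Matrix (Fin n) (Fin n) R), (A * B).map (C : R →+* R[X])
        = A.map C * B.map C := by
      intro A B
      simp only [← RingHom.mapMatrix_apply, map_mul]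
    rw [Matrix.charmatrix, Matrix.charmatrix]
    rw [Matrix.mul_sub, Matrix.sub_mul]
    congr 1
    · have hc : Matrix.scalar (Fin n) (X : R[X]) * (M.map (C : R →+* R[X]))
          = (M.map (C : R →+* R[X])) * Matrix.scalar (Fin n) (X : R[X]) :=
        (Matrix.scalar_commute (X : R[X]) (fun r => Commute.all _ _) (M.map C)).eq
      have h1 : (M.map (C : R →+* R[X])) * Matrix.scalar (Fin n) (X : R[X]) * (M⁻¹.map C)
          = Matrix.scalar (Fin n) (X : R[X]) * ((M.map C) * (M⁻¹.map C)) := by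
        rw [← hc, Matrix.mul_assoc]
      rw [h1, ← hmap, hMN]
      simp
    · simp only [RingHom.mapMatrix_apply]
      rw [h, hmap, hmap]
  rw [Matrix.charpoly, Matrix.charpoly, hcm]
  rw [Matrix.det_mul, Matrix.det_mul]
  have : (M.map (C : R →+* R[X])).det * (M⁻¹.map C).det = 1 := by
    rw [← Matrix.det_mul, ← RingHom.mapMatrix_apply, ← RingHom.mapMatrix_apply, ← map_mul,
      hMN]
    simp
  calc (M.map (C : R →+* R[X])).det * (Matrix.charmatrix P).det * (M⁻¹.map C).det
      = (Matrix.charmatrix P).det * ((M.map C).det * (M⁻¹.map C).det) := by ring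
    _ = (Matrix.charmatrix P).det := by rw [this, mul_one]

theorem charpoly_diagonal {R : Type*} [CommRing R] {n : ℕ} (v : Fin n → R) :
    (Matrix.diagonal v).charpoly = ∏ i, (X - C (v i)) := by
  have : Matrix.charmatrix (Matrix.diagonal v) = Matrix.diagonal fun i => (X : R[X]) - C (v i) := by
    ext i j
    by_cases hij : i = j
    · subst hij; simp
    · rw [Matrix.charmatrix_apply_ne _ _ _ hij, Matrix.diagonal_apply_ne _ hij,
        Matrix.diagonal_apply_ne _ hij]
      simp
  rw [Matrix.charpoly, this, Matrix.det_diagonal]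

end

end RSAux


open RSAux

/-- **Factorization of the characteristic polynomial of a regular semisimple matrix.**
Let `G` be a matrix over `ℂ((z))` and `q₁, …, qₙ ∈ ℂ[z⁻¹]` pairwise distinct.  If some
`U` over `ℂ[[z]]`, invertible over `ℂ[[z]]`, satisfies
`U G U⁻¹ + U′U⁻¹ = diag(q₁, …, qₙ)·z⁻¹`, then
`det(y Iₙ − G) = ∏ᵢ (y − gᵢ)` in `ℂ((z))[y]` with `gᵢ − qᵢ z⁻¹ ∈ ℂ[[z]]` for each `i`. -/
theorem charpoly_factors_of_regular_semisimple
    (n : ℕ) (G : Matrix (Fin n) (Fin n) (LaurentSeries ℂ))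
    (q : Fin n → LaurentSeries ℂ)
    (hq : ∀ i, ∀ k : ℤ, 0 < k → (q i).coeff k = 0)
    (hqdist : Function.Injective q)
    (U : Matrix (Fin n) (Fin n) (PowerSeries ℂ)) (hU : IsUnit U)
    (hgauge :
      U.map (HahnSeries.ofPowerSeries ℤ ℂ) * G * (U.map (HahnSeries.ofPowerSeries ℤ ℂ))⁻¹
        + (U.map (PowerSeries.derivative ℂ)).map (HahnSeries.ofPowerSeries ℤ ℂ)
            * (U.map (HahnSeries.ofPowerSeries ℤ ℂ))⁻¹
        = Matrix.diagonal fun i => q i * HahnSeries.single (-1 : ℤ) (1 : ℂ)) :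
    ∃ g : Fin n → LaurentSeries ℂ,
      G.charpoly = (∏ i, (Polynomial.X - Polynomial.C (g i))) ∧
      ∀ i, ∀ k : ℤ, k < 0 →
        (g i - q i * HahnSeries.single (-1 : ℤ) (1 : ℂ)).coeff k = 0 := by
  classical
  set of' : PowerSeries ℂ →+* LaurentSeries ℂ := HahnSeries.ofPowerSeries ℤ ℂ with hof
  set d : Fin n → LaurentSeries ℂ := fun i => q i * HahnSeries.single (-1 : ℤ) (1 : ℂ) with hd
  set D : Matrix (Fin n) (Fin n) (LaurentSeries ℂ) := Matrix.diagonal d with hD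
  set Uc : Matrix (Fin n) (Fin n) (LaurentSeries ℂ) := U.map of' with hUcd
  -- `Uc` is invertible
  have hUcU : IsUnit Uc := by
    have := hU.map (RingHom.mapMatrix of' :
      Matrix (Fin n) (Fin n) (PowerSeries ℂ) →+* Matrix (Fin n) (Fin n) (LaurentSeries ℂ))
    simpa [RingHom.mapMatrix_apply] using this
  have hUcdet : IsUnit Uc.det := (Matrix.isUnit_iff_isUnit_det Uc).mp hUcU
  obtain ⟨u, hu⟩ := hU
  set Ui : Matrix (Fin n) (Fin n) (PowerSeries ℂ) := ↑u⁻¹ with hUid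
  have hUUi : U * Ui = 1 := by rw [← hu]; exact u.mul_inv
  have hmapmul : ∀ (A B : Matrix (Fin n) (Fin n) (PowerSeries ℂ)),
      (A * B).map of' = A.map of' * B.map of' := by
    intro A B
    simp only [← RingHom.mapMatrix_apply, map_mul]
  have hinv : Uc⁻¹ = Ui.map of' := by
    apply Matrix.inv_eq_right_inv
    rw [hUcd, ← hmapmul, hUUi]
    simp [← RingHom.mapMatrix_apply]
  -- the power series matrix `Q` with `P = Q.map of'`
  set Q : Matrix (Fin n) (Fin n) (PowerSeries ℂ) := U.map (PowerSeries.derivative ℂ) * Ui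
    with hQd
  set P : Matrix (Fin n) (Fin n) (LaurentSeries ℂ) := Q.map of' with hPd
  have hB : Uc * G * Uc⁻¹ = D - P := by
    have h1 : (U.map (PowerSeries.derivative ℂ)).map of' * Uc⁻¹ = P := by
      rw [hinv, hPd, hQd, hmapmul]
    rw [eq_sub_iff_add_eq, ← h1]
    exact hgauge
  have hG : Uc⁻¹ * (D - P) * Uc = G := by
    rw [← hB]
    rw [Matrix.mul_assoc Uc G Uc⁻¹, ← Matrix.mul_assoc Uc⁻¹ Uc _,
      Matrix.nonsing_inv_mul Uc hUcdet, Matrix.one_mul,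
      Matrix.mul_assoc G Uc⁻¹ Uc, Matrix.nonsing_inv_mul Uc hUcdet, Matrix.mul_one]
  -- construction of the `β` matrix
  have hdsub : ∀ i j : Fin n, d i - d j = (q i - q j) * HahnSeries.single (-1 : ℤ) (1 : ℂ) := by
    intro i j
    rw [hd]
    simp only [sub_mul]
  have hbeta_ex : ∀ i j : Fin n, i ≠ j → ∃ β : PowerSeries ℂ,
      (PowerSeries.X : PowerSeries ℂ) ∣ β ∧ of' β * (d i - d j) = 1 := by
    intro i j hij
    apply exists_beta
    · rw [hdsub]
      exact mul_ne_zero (sub_ne_zero.mpr fun h => hij (hqdist h))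
        (HahnSeries.single_ne_zero one_ne_zero)
    · intro k hk
      rw [hdsub]
      have h1 : k = (k + 1) + (-1 : ℤ) := by ring
      rw [h1, HahnSeries.coeff_mul_single_add, mul_one, HahnSeries.coeff_sub,
        hq i _ (by omega), hq j _ (by omega), sub_zero]
  set βM : Matrix (Fin n) (Fin n) (PowerSeries ℂ) :=
    Matrix.of fun i j => if h : i = j then 0 else (hbeta_ex i j h).choose with hβMd
  have hβX : ∀ i j, (PowerSeries.X : PowerSeries ℂ) ∣ βM i j := by
    intro i j
    by_cases h : i = j
    · simp [hβMd, h]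
    · simpa [hβMd, h] using (hbeta_ex i j h).choose_spec.1
  have hβmul : ∀ i j (h : i ≠ j), of' (βM i j) * (d i - d j) = 1 := by
    intro i j h
    simpa [hβMd, h] using (hbeta_ex i j h).choose_spec.2
  have hβdiag : ∀ i, βM i i = 0 := by intro i; simp [hβMd]
  -- the fixed point
  set W : Matrix (Fin n) (Fin n) (PowerSeries ℂ) := Wfix (Phi Q βM) with hWd
  have hWfix : Phi Q βM W = W := fixed _ (phi_causal Q βM hβX)
  have hWe : ∀ i j, W i j = βM i j * innerM Q W i j := by
    intro i j
    conv_lhs => rw [← hWfix]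
    simp [Phi]
  have hWdiag : ∀ i, W i i = 0 := by
    intro i
    rw [hWe, hβdiag, zero_mul]
  have hWcc : ∀ i j, PowerSeries.constantCoeff (W i j) = 0 := by
    intro i j
    have h1 : (PowerSeries.X : PowerSeries ℂ) ∣ W i j := by
      rw [hWe]; exact Dvd.dvd.mul_right (hβX i j) _
    exact PowerSeries.X_dvd_iff.mp h1
  set E : Fin n → PowerSeries ℂ := fun j => -((Q * (1 + W)) j j) with hEd
  set V : Matrix (Fin n) (Fin n) (PowerSeries ℂ) := 1 + W with hVd
  have hVccd : V.map (PowerSeries.constantCoeff) = 1 := by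
    ext i j
    by_cases hij : i = j
    · subst hij
      simp [hVd, Matrix.map_apply, Matrix.add_apply, hWcc, Matrix.one_apply_eq]
    · simp [hVd, Matrix.map_apply, Matrix.add_apply, hWcc, Matrix.one_apply_ne hij]
  have hVdet : IsUnit V.det := by
    rw [PowerSeries.isUnit_iff_constantCoeff]
    have h1 : PowerSeries.constantCoeff V.det = (V.map (PowerSeries.constantCoeff)).det :=
      RingHom.map_det _ _
    rw [h1, hVccd, Matrix.det_one]
    exact isUnit_one
  set Vl : Matrix (Fin n) (Fin n) (LaurentSeries ℂ) := V.map of' with hVld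
  have hVldet : IsUnit Vl.det := by
    have h1 : Vl.det = of' V.det := (RingHom.map_det of' V).symm
    rw [h1]
    exact hVdet.map of'
  set El : Matrix (Fin n) (Fin n) (LaurentSeries ℂ) :=
    Matrix.diagonal (fun i => of' (E i)) with hEld
  -- the key similarity
  have hkey : (D - P) * Vl = Vl * (D + El) := by
    apply Matrix.ext
    intro i j
    rw [Matrix.sub_mul, Matrix.mul_add, Matrix.sub_apply, Matrix.add_apply, hD, hEld,
      Matrix.diagonal_mul, Matrix.mul_diagonal, Matrix.mul_diagonal]
    have hPV : (P * Vl) i j = of' ((Q * V) i j) := by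
      rw [hPd, hVld, ← hmapmul, Matrix.map_apply]
    by_cases hij : i = j
    · subst hij
      have hVii : Vl i i = 1 := by
        simp [hVld, hVd, Matrix.map_apply, Matrix.add_apply, hWdiag i, Matrix.one_apply_eq]
      have hEi : of' (E i) = - of' ((Q * V) i i) := by
        simp only [hEd, map_neg]
      rw [hVii, hPV, hEi]
      ring
    · have hVij : Vl i j = of' (W i j) := by
        simp [hVld, hVd, Matrix.map_apply, Matrix.add_apply, Matrix.one_apply_ne hij]
      have h2 : innerM Q W i j = (Q * V) i j + W i j * E j := by
        rw [inner_apply]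
      have h3 : (d i - d j) * of' (W i j) = of' (innerM Q W i j) := by
        conv_lhs => rw [hWe i j]
        rw [map_mul, ← mul_assoc, mul_comm (d i - d j) (of' (βM i j)), hβmul i j hij, one_mul]
      have hmain : (d i - d j) * of' (W i j)
          = of' ((Q * V) i j) + of' (W i j) * of' (E j) := by
        rw [h3, h2, map_add, map_mul]
      rw [hVij, hPV]
      linear_combination hmain
  -- conclusion
  refine ⟨fun i => d i + of' (E i), ?_, ?_⟩
  · have c1 : (D - P).charpoly = G.charpoly := by
      refine charpoly_similar Uc (D - P) G hUcdet ?_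
      rw [← hG, ← Matrix.mul_assoc, ← Matrix.mul_assoc, Matrix.mul_nonsing_inv Uc hUcdet,
        Matrix.one_mul]
    have c2 : (D - P).charpoly = (D + El).charpoly :=
      charpoly_similar Vl (D - P) (D + El) hVldet hkey
    have c3 : D + El = Matrix.diagonal (fun i => d i + of' (E i)) := by
      rw [hD, hEld, Matrix.diagonal_add]
    rw [← c1, c2, c3, charpoly_diagonal]
  · intro i k hk
    have h1 : (fun i => d i + of' (E i)) i - q i * HahnSeries.single (-1 : ℤ) (1 : ℂ)
        = of' (E i) := by
      simp only [hd]
      ring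
    rw [h1]
    exact of_coeff_neg _ k hk
end

section
/- Let p_1, …, p_n be pairwise distinct elements of t⁻¹ℂ[t⁻¹], let G ∈ M(n, ℂ((t^s))), and suppose det(y I_n − G) = ∏_{i=1}^n (y − g_i) in ℂ((t))[y] with g_i ∈ ℂ((t)) satisfying pr⁻(z · g_i) = p_i for each i, where z = t^s. Then ξ permutes the set {g_1, …, g_n}, and for each ξ-orbit O of this set, choosing a representative g ∈ O and writing r = |O|, the polynomial P_O(y) := ∏_{j=0}^{r−1} (y − ξ^j(g)) has all its coefficients in the subfield ℂ((t^s)) and is irreducible in ℂ((t^s))[y]; moreover det(y I_n − G) = ∏_O P_O(y), the product over all ξ-orbits, is the factorization of the characteristic polynomial of G into irreducible factors in ℂ((t^s))[y]. -/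
open Polynomial

/-- A Laurent series lies in the subfield `ℂ((t^s))` iff all coefficients with exponent
not divisible by `s` vanish. -/
def InSubfieldPow (s : ℕ) (f : LaurentSeries ℂ) : Prop :=
  ∀ k : ℤ, ¬ ((s : ℤ) ∣ k) → f.coeff k = 0

/-- The polynomial `P_O(y) = ∏_{j=0}^{r−1} (y − ξ^j(g))` attached to the `ξ`-orbit of `g`,
where `r` is the least positive period of `g` under `ξ`. -/
noncomputable def orbitPoly (ξ : LaurentSeries ℂ ≃+* LaurentSeries ℂ)
    (g : LaurentSeries ℂ) : Polynomial (LaurentSeries ℂ) :=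
  ∏ j ∈ Finset.range (Function.minimalPeriod ⇑ξ g),
    (Polynomial.X - Polynomial.C ((⇑ξ)^[j] g))

/-- **Irreducible factorization of the characteristic polynomial over `ℂ((t^s))`.**
With `ξ`, `pᵢ`, `G`, `gᵢ` as in the ramified HTL situation (`ξ` the automorphism of
`ℂ((t))` given by `t ↦ ζt`, `ζ = exp(2πi/s)`; `pᵢ ∈ t⁻¹ℂ[t⁻¹]` pairwise distinct; `G`
with entries in `ℂ((t^s))`; `det(y Iₙ − G) = ∏ᵢ (y − gᵢ)` with `pr⁻(z·gᵢ) = pᵢ`,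
`z = t^s`), the automorphism `ξ` permutes the set `{g₁, …, gₙ}`; each orbit has a
positive least period `r`, the associated polynomial `P_O(y) = ∏_{j<r} (y − ξ^j(g))`
has all coefficients in `ℂ((t^s))` and is irreducible in `ℂ((t^s))[y]`; and the
characteristic polynomial of `G` is the product of the `P_O` over a set of orbit
representatives. -/
theorem charpoly_irreducible_factorization
    (n s : ℕ) (hs : 0 < s)
    (ξ : LaurentSeries ℂ ≃+* LaurentSeries ℂ)
    (hξ : ∀ f : LaurentSeries ℂ, ∀ k : ℤ,
      (ξ f).coeff k = Complex.exp (2 * (Real.pi : ℂ) * Complex.I / (s : ℂ)) ^ k * f.coeff k)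
    (p : Fin n → LaurentSeries ℂ)
    (hp : ∀ i, ∀ k : ℤ, 0 ≤ k → (p i).coeff k = 0)
    (hpdist : Function.Injective p)
    (G : Matrix (Fin n) (Fin n) (LaurentSeries ℂ))
    (hG : ∀ i j, InSubfieldPow s (G i j))
    (g : Fin n → LaurentSeries ℂ)
    (hfact : G.charpoly = ∏ i, (Polynomial.X - Polynomial.C (g i)))
    (hpr : ∀ i, ∀ k : ℤ, k < 0 →
      (HahnSeries.single (s : ℤ) (1 : ℂ) * g i - p i).coeff k = 0) :
    (∀ i, ∃ j, ξ (g i) = g j) ∧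
    (∀ i, 0 < Function.minimalPeriod ⇑ξ (g i)) ∧
    (∀ i, ∀ m : ℕ, InSubfieldPow s ((orbitPoly ξ (g i)).coeff m)) ∧
    (∀ i, ∀ P₁ P₂ : Polynomial (LaurentSeries ℂ),
      (∀ m : ℕ, InSubfieldPow s (P₁.coeff m)) →
      (∀ m : ℕ, InSubfieldPow s (P₂.coeff m)) →
      orbitPoly ξ (g i) = P₁ * P₂ → P₁.degree = 0 ∨ P₂.degree = 0) ∧
    ∃ Rep : Finset (Fin n),
      (∀ i : Fin n, ∃! l, l ∈ Rep ∧ ∃ m : ℕ, (⇑ξ)^[m] (g l) = g i) ∧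
      G.charpoly = ∏ l ∈ Rep, orbitPoly ξ (g l) := by
  classical
  set ζ : ℂ := Complex.exp (2 * (Real.pi : ℂ) * Complex.I / (s : ℂ)) with hζdef
  have hprim : IsPrimitiveRoot ζ s := Complex.isPrimitiveRoot_exp s hs.ne'
  have hζs : ∀ k : ℤ, ζ ^ k = 1 ↔ (s : ℤ) ∣ k := hprim.zpow_eq_one_iff_dvd
  -- fixed-point characterization of the subfield
  have hfix : ∀ f : LaurentSeries ℂ, InSubfieldPow s f ↔ ξ f = f := by
    intro f
    constructor
    · intro h
      ext k
      rw [hξ]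
      by_cases hk : (s : ℤ) ∣ k
      · rw [(hζs k).mpr hk, one_mul]
      · rw [h k hk, mul_zero]
    · intro h k hk
      have h2 : (ξ f).coeff k = f.coeff k := by rw [h]
      rw [hξ] at h2
      by_contra hc
      exact hk ((hζs k).mp (mul_right_cancel₀ hc (by rw [h2, one_mul])))
  -- coefficient of iterates
  have hiter : ∀ (m : ℕ) (f : LaurentSeries ℂ) (k : ℤ),
      ((⇑ξ)^[m] f).coeff k = (ζ ^ k) ^ m * f.coeff k := by
    intro m
    induction m with
    | zero => intro f k; simp
    | succ m ih =>
      intro f k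
      rw [Function.iterate_succ_apply', hξ, ih, pow_succ]
      ring
  -- every point is s-periodic
  have hper : ∀ f : LaurentSeries ℂ, Function.IsPeriodicPt ⇑ξ s f := by
    intro f
    show (⇑ξ)^[s] f = f
    ext k
    rw [hiter]
    have h1 : (ζ ^ k) ^ s = 1 := by
      rw [← zpow_natCast (ζ ^ k) s, ← zpow_mul, mul_comm, zpow_mul, zpow_natCast,
        hprim.pow_eq_one, one_zpow]
    rw [h1, one_mul]
  have hminpos : ∀ f : LaurentSeries ℂ, 0 < Function.minimalPeriod ⇑ξ f :=
    fun f => (hper f).minimalPeriod_pos hs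
  -- roots of a product of linear factors
  have hrootsprod : ∀ h : Fin n → LaurentSeries ℂ,
      (∏ i, (X - C (h i))).roots = Finset.univ.val.map h := by
    intro h
    have := Polynomial.roots_multiset_prod_X_sub_C (Finset.univ.val.map h)
    rw [Multiset.map_map] at this
    rw [Finset.prod_eq_multiset_prod]
    exact this
  -- ξ fixes the characteristic polynomial
  have hGfix : G.map ⇑(ξ : LaurentSeries ℂ →+* LaurentSeries ℂ) = G :=
    Matrix.ext fun i j => (hfix (G i j)).mp (hG i j)
  have hprodfix : (∏ i, (X - C (ξ (g i)))) = ∏ i, (X - C (g i)) := by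
    have h1 := Matrix.charpoly_map G (ξ : LaurentSeries ℂ →+* LaurentSeries ℂ)
    rw [hGfix, hfact, Polynomial.map_prod] at h1
    simp only [Polynomial.map_sub, Polynomial.map_X, Polynomial.map_C,
      RingEquiv.coe_toRingHom] at h1
    exact h1.symm
  -- claim 1 : ξ permutes the g i
  have hperm : ∀ i, ∃ j, ξ (g i) = g j := by
    intro i
    have hmem : ξ (g i) ∈ Finset.univ.val.map g := by
      rw [← hrootsprod g, ← hprodfix, hrootsprod (fun i => ξ (g i))]
      exact Multiset.mem_map_of_mem _ (Finset.mem_univ_val i)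
    obtain ⟨j, _, hj⟩ := Multiset.mem_map.mp hmem
    exact ⟨j, hj.symm⟩
  have horb : ∀ (m : ℕ) (i : Fin n), ∃ j, (⇑ξ)^[m] (g i) = g j := by
    intro m
    induction m with
    | zero => intro i; exact ⟨i, rfl⟩
    | succ m ih =>
      intro i
      obtain ⟨j, hj⟩ := ih i
      obtain ⟨k, hk⟩ := hperm j
      exact ⟨k, by rw [Function.iterate_succ_apply', hj, hk]⟩
  -- g is injective
  have hginj : Function.Injective g := by
    intro i j hij
    apply hpdist
    ext k
    by_cases hk : k < 0
    · have hi := hpr i k hk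
      have hj := hpr j k hk
      rw [hij] at hi
      rw [HahnSeries.coeff_sub, sub_eq_zero] at hi hj
      rw [← hi, ← hj]
    · push_neg at hk
      rw [hp i k hk, hp j k hk]
  -- ξ fixes orbitPoly (map)
  have hmapOrbit : ∀ f : LaurentSeries ℂ,
      (orbitPoly ξ f).map (ξ : LaurentSeries ℂ →+* LaurentSeries ℂ) = orbitPoly ξ f := by
    intro f
    obtain ⟨r', hr'⟩ := Nat.exists_eq_succ_of_ne_zero (hminpos f).ne'
    simp only [orbitPoly, Polynomial.map_prod, Polynomial.map_sub, Polynomial.map_X,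
      Polynomial.map_C, RingEquiv.coe_toRingHom]
    have hstep : ∀ j : ℕ, ξ ((⇑ξ)^[j] f) = (⇑ξ)^[j + 1] f := by
      intro j; rw [Function.iterate_succ_apply']
    have hlast : (⇑ξ)^[r' + 1] f = f := by
      have h9 := Function.iterate_minimalPeriod (f := ⇑ξ) (x := f)
      rwa [hr'] at h9
    calc (∏ j ∈ Finset.range (Function.minimalPeriod ⇑ξ f), (X - C (ξ ((⇑ξ)^[j] f))))
        = ∏ j ∈ Finset.range (Function.minimalPeriod ⇑ξ f), (X - C ((⇑ξ)^[j + 1] f)) :=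
          Finset.prod_congr rfl fun j _ => by rw [hstep]
      _ = ∏ j ∈ Finset.range (Function.minimalPeriod ⇑ξ f), (X - C ((⇑ξ)^[j] f)) := by
          rw [hr', Finset.prod_range_succ, Finset.prod_range_succ']
          rw [hlast, Function.iterate_zero_apply]
  -- coefficients of orbitPoly lie in the subfield
  have hcoeffOrbit : ∀ (f : LaurentSeries ℂ) (m : ℕ),
      InSubfieldPow s ((orbitPoly ξ f).coeff m) := by
    intro f m
    apply (hfix _).mpr
    have := congrArg (fun P => P.coeff m) (hmapOrbit f)
    simpa [Polynomial.coeff_map] using this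
  -- basic facts about orbitPoly
  have hmonic : ∀ f : LaurentSeries ℂ, (orbitPoly ξ f).Monic := fun f =>
    Polynomial.monic_prod_of_monic _ _ fun j _ => Polynomial.monic_X_sub_C _
  have hdegOrbit : ∀ f : LaurentSeries ℂ,
      (orbitPoly ξ f).natDegree = Function.minimalPeriod ⇑ξ f := by
    intro f
    rw [orbitPoly, Polynomial.natDegree_prod _ _ fun j _ => Polynomial.X_sub_C_ne_zero _]
    simp
  -- irreducibility
  have hirred : ∀ (f : LaurentSeries ℂ), ∀ P₁ P₂ : Polynomial (LaurentSeries ℂ),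
      (∀ m : ℕ, InSubfieldPow s (P₁.coeff m)) →
      (∀ m : ℕ, InSubfieldPow s (P₂.coeff m)) →
      orbitPoly ξ f = P₁ * P₂ → P₁.degree = 0 ∨ P₂.degree = 0 := by
    intro f P₁ P₂ h₁ h₂ heq
    by_cases hd : P₁.degree = 0
    · exact Or.inl hd
    right
    have hO0 : orbitPoly ξ f ≠ 0 := (hmonic f).ne_zero
    have hP₁ : P₁ ≠ 0 := by rintro rfl; rw [zero_mul] at heq; exact hO0 heq
    have hP₂ : P₂ ≠ 0 := by rintro rfl; rw [mul_zero] at heq; exact hO0 heq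
    have hsplO : Polynomial.Splits (orbitPoly ξ f) := by
      rw [orbitPoly]
      exact Polynomial.Splits.prod fun j _ => Polynomial.Splits.X_sub_C _
    have hspl₁ : Polynomial.Splits P₁ :=
      Polynomial.Splits.of_dvd hsplO hO0 ⟨P₂, heq⟩
    obtain ⟨x, hx⟩ := Polynomial.Splits.exists_eval_eq_zero hspl₁ hd
    have hx' : P₁.eval x = 0 := hx
    -- x is a root of orbitPoly, so x = ξ^[j₀] f
    have hxO : (orbitPoly ξ f).eval x = 0 := by
      rw [heq, Polynomial.eval_mul, hx', zero_mul]
    rw [orbitPoly, Polynomial.eval_prod] at hxO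
    obtain ⟨j₀, hj₀mem, hj₀⟩ := Finset.prod_eq_zero_iff.mp hxO
    have hxval : x = (⇑ξ)^[j₀] f := by
      simpa [sub_eq_zero] using hj₀
    -- P₁ is fixed by ξ, hence maps roots to roots
    have hP₁fix : P₁.map (ξ : LaurentSeries ℂ →+* LaurentSeries ℂ) = P₁ :=
      Polynomial.ext fun m => by
        rw [Polynomial.coeff_map, RingEquiv.coe_toRingHom]
        exact (hfix _).mp (h₁ m)
    have hroot_step : ∀ y : LaurentSeries ℂ, P₁.eval y = 0 → P₁.eval (ξ y) = 0 := by
      intro y hy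
      have h3 : P₁.eval₂ (ξ : LaurentSeries ℂ →+* LaurentSeries ℂ) (ξ y) = ξ (P₁.eval y) :=
        Polynomial.eval₂_at_apply _ _
      rw [hy, map_zero] at h3
      rw [← Polynomial.eval_map, hP₁fix] at h3
      exact h3
    have hroot_iter : ∀ m : ℕ, P₁.eval ((⇑ξ)^[m] x) = 0 := by
      intro m
      induction m with
      | zero => exact hx'
      | succ m ih => rw [Function.iterate_succ_apply']; exact hroot_step _ ih
    -- every ξ^[j] f, j < r, is a root of P₁
    set r := Function.minimalPeriod ⇑ξ f with hrdef
    have hj₀lt : j₀ < r := Finset.mem_range.mp hj₀mem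
    have hroots_all : ∀ j < r, P₁.eval ((⇑ξ)^[j] f) = 0 := by
      intro j hj
      have h5 : (⇑ξ)^[j + r - j₀] x = (⇑ξ)^[j] f := by
        rw [hxval, ← Function.iterate_add_apply]
        have h6 : j + r - j₀ + j₀ = j + r := by omega
        rw [h6, Function.iterate_add_apply, hrdef, Function.iterate_minimalPeriod]
      rw [← h5]; exact hroot_iter _
    -- so P₁ has at least r distinct roots
    have hSsub : (Finset.range r).image (fun j => (⇑ξ)^[j] f) ⊆ P₁.roots.toFinset := by
      intro y hy
      obtain ⟨j, hj, rfl⟩ := Finset.mem_image.mp hy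
      rw [Multiset.mem_toFinset, Polynomial.mem_roots hP₁]
      exact hroots_all j (Finset.mem_range.mp hj)
    have hScard : ((Finset.range r).image (fun j => (⇑ξ)^[j] f)).card = r := by
      rw [Finset.card_image_of_injOn, Finset.card_range]
      intro a ha b hb hab
      exact Function.iterate_injOn_Iio_minimalPeriod
        (Finset.mem_range.mp ha) (Finset.mem_range.mp hb) hab
    have hr_le : r ≤ P₁.natDegree := by
      calc r = ((Finset.range r).image (fun j => (⇑ξ)^[j] f)).card := hScard.symm
        _ ≤ P₁.roots.toFinset.card := Finset.card_le_card hSsub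
        _ ≤ Multiset.card P₁.roots := Multiset.toFinset_card_le _
        _ ≤ P₁.natDegree := Polynomial.card_roots' _
    have hsum : P₁.natDegree + P₂.natDegree = r := by
      rw [← Polynomial.natDegree_mul hP₁ hP₂, ← heq, hdegOrbit]
    have h2z : P₂.natDegree = 0 := by omega
    rw [Polynomial.degree_eq_natDegree hP₂, h2z]
    rfl
  -- equivalence relation on indices
  set rel : Fin n → Fin n → Prop := fun i j => ∃ m : ℕ, (⇑ξ)^[m] (g i) = g j with hreldef
  have hrel_refl : ∀ i, rel i i := fun i => ⟨0, rfl⟩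
  have hrel_trans : ∀ {i j k}, rel i j → rel j k → rel i k := by
    rintro i j k ⟨m, hm⟩ ⟨m', hm'⟩
    exact ⟨m' + m, by rw [Function.iterate_add_apply, hm, hm']⟩
  have hrel_symm : ∀ {i j}, rel i j → rel j i := by
    rintro i j ⟨m, hm⟩
    obtain ⟨s', rfl⟩ := Nat.exists_eq_succ_of_ne_zero hs.ne'
    refine ⟨m * s', ?_⟩
    rw [← hm, ← Function.iterate_add_apply]
    have h7 : m * s' + m = m * (s' + 1) := by ring
    rw [h7]
    exact (hper (g i)).const_mul m
  -- the representative function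
  have hclassne : ∀ i : Fin n, (Finset.univ.filter (fun j => rel j i)).Nonempty :=
    fun i => ⟨i, Finset.mem_filter.mpr ⟨Finset.mem_univ i, hrel_refl i⟩⟩
  set rep : Fin n → Fin n :=
    fun i => (Finset.univ.filter (fun j => rel j i)).min' (hclassne i) with hrepdef
  have hrep_rel : ∀ i, rel (rep i) i := by
    intro i
    have := Finset.min'_mem (Finset.univ.filter (fun j => rel j i)) (hclassne i)
    exact (Finset.mem_filter.mp this).2
  have hrep_congr : ∀ i j, rel i j → rep i = rep j := by
    intro i j hij
    apply le_antisymm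
    · apply Finset.min'_le
      refine Finset.mem_filter.mpr ⟨Finset.mem_univ _, ?_⟩
      exact hrel_trans (hrep_rel j) (hrel_symm hij)
    · apply Finset.min'_le
      refine Finset.mem_filter.mpr ⟨Finset.mem_univ _, ?_⟩
      exact hrel_trans (hrep_rel i) hij
  have hrep_idem : ∀ i, rep (rep i) = rep i := fun i => hrep_congr _ _ (hrep_rel i)
  set Rep : Finset (Fin n) := Finset.univ.image rep with hRepdef
  have hRep_mem : ∀ l ∈ Rep, rep l = l := by
    intro l hl
    obtain ⟨i, _, rfl⟩ := Finset.mem_image.mp hl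
    exact hrep_idem i
  -- part 5a : unique representative
  have hRep1 : ∀ i : Fin n, ∃! l, l ∈ Rep ∧ ∃ m : ℕ, (⇑ξ)^[m] (g l) = g i := by
    intro i
    refine ⟨rep i, ⟨Finset.mem_image_of_mem rep (Finset.mem_univ i), hrep_rel i⟩, ?_⟩
    rintro l ⟨hl, hrel⟩
    have h8 : rep l = rep i := hrep_congr l i hrel
    rw [← hRep_mem l hl, h8]
  -- part 5b : factorization into orbit polynomials
  have hRep2 : G.charpoly = ∏ l ∈ Rep, orbitPoly ξ (g l) := by
    rw [hfact]
    rw [← Finset.prod_fiberwise_of_maps_to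
      (g := rep) (t := Rep) (fun i _ => Finset.mem_image_of_mem rep (Finset.mem_univ i))
      (fun i => X - C (g i))]
    refine Finset.prod_congr rfl fun l hl => ?_
    -- fiber over l ↔ orbit of g l
    have hrl : rep l = l := hRep_mem l hl
    rw [orbitPoly]
    refine (Finset.prod_bij
      (i := fun j _ => Classical.choose (horb j l)) ?_ ?_ ?_ ?_).symm
    · intro j hj
      have hchoose : (⇑ξ)^[j] (g l) = g (Classical.choose (horb j l)) :=
        Classical.choose_spec (horb j l)
      refine Finset.mem_filter.mpr ⟨Finset.mem_univ _, ?_⟩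
      have : rel l (Classical.choose (horb j l)) := ⟨j, hchoose⟩
      rw [← hrep_congr _ _ this, hrl]
    · intro a ha b hb hab
      have hca : (⇑ξ)^[a] (g l) = g (Classical.choose (horb a l)) :=
        Classical.choose_spec (horb a l)
      have hcb : (⇑ξ)^[b] (g l) = g (Classical.choose (horb b l)) :=
        Classical.choose_spec (horb b l)
      have hab' : Classical.choose (horb a l) = Classical.choose (horb b l) := hab
      rw [hab'] at hca
      refine Function.iterate_injOn_Iio_minimalPeriod
        (Finset.mem_range.mp ha) (Finset.mem_range.mp hb) ?_
      show (⇑ξ)^[a] (g l) = (⇑ξ)^[b] (g l)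
      rw [hca, ← hcb]
    · intro i hi
      obtain ⟨_, hrepi⟩ := Finset.mem_filter.mp hi
      have hli : rel l i := by rw [← hrepi]; exact hrep_rel i
      obtain ⟨m, hm⟩ := hli
      refine ⟨m % Function.minimalPeriod ⇑ξ (g l),
        Finset.mem_range.mpr (Nat.mod_lt _ (hminpos (g l))), ?_⟩
      apply hginj
      show g (Classical.choose (horb (m % Function.minimalPeriod ⇑ξ (g l)) l)) = g i
      have hc : (⇑ξ)^[m % Function.minimalPeriod ⇑ξ (g l)] (g l) =
          g (Classical.choose (horb (m % Function.minimalPeriod ⇑ξ (g l)) l)) :=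
        Classical.choose_spec (horb _ l)
      rw [← hc, Function.iterate_mod_minimalPeriod_eq, hm]
    · intro j hj
      have hchoose : (⇑ξ)^[j] (g l) = g (Classical.choose (horb j l)) :=
        Classical.choose_spec (horb j l)
      exact congrArg (fun y => X - C y) hchoose
  exact ⟨hperm, fun i => hminpos (g i), fun i => hcoeffOrbit (g i),
    fun i => hirred (g i), Rep, hRep1, hRep2⟩
end
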